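/- arXiv:1303.0572 — 6 statements merged into one kernel-verified Lean document; each statement's English description precedes it below -/
import Mathlib

section
/- Under the Gallager parity check ensemble with parameters n and k (1 <= k < n), the transmitted codeword X^n(q) is uniformly distributed over the nonzero vectors of GF(2)^n: for every nonzero x^n in GF(2)^n, Pr{X^n(q) = x^n} = 1/(2^n - 1). -/
open scoped Classical BigOperators
open Finset

noncomputable section

/-- The Gaussian tail function `Q(s) = (1/sqrt(2*pi)) * int_s^infty e^{-x^2/2} dx`. -/
def gaussQ (s : ℝ) : ℝ :=
  (1 / Real.sqrt (2 * Real.pi)) * ∫ x in Set.Ioi s, Real.exp (-x ^ 2 / 2)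

/-- The inverse of the Gaussian tail function (on `(0,1)`). -/
def gaussQinv : ℝ → ℝ := Function.invFun gaussQ

/-- The nonzero vectors in the null space of a parity-check matrix over `GF(2)`. -/
def nullNZ (n k : ℕ) (H : Matrix (Fin (n - k)) (Fin n) (ZMod 2)) :
    Finset (Fin n → ZMod 2) :=
  Finset.univ.filter fun x => Matrix.mulVec H x = 0 ∧ x ≠ 0

/-- There is a linear automorphism of `GF(2)^m` sending any nonzero `y` to any nonzero `x`. -/
lemma exists_linEquiv_map (m : ℕ) (x y : Fin m → ZMod 2) (hx : x ≠ 0) (hy : y ≠ 0) :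
    ∃ e : (Fin m → ZMod 2) ≃ₗ[ZMod 2] (Fin m → ZMod 2), e y = x := by
  have hix := LinearIndepOn.singleton (R := ZMod 2) (v := id) (i := x) hx
  have hiy := LinearIndepOn.singleton (R := ZMod 2) (v := id) (i := y) hy
  let bX := Module.Basis.extend hix
  let bY := Module.Basis.extend hiy
  have hxm : x ∈ hix.extend (Set.subset_univ _) :=
    hix.subset_extend _ (Set.mem_singleton x)
  have hym : y ∈ hiy.extend (Set.subset_univ _) :=
    hiy.subset_extend _ (Set.mem_singleton y)
  let f := bY.indexEquiv bX
  let f' := f.trans (Equiv.swap (f ⟨y, hym⟩) ⟨x, hxm⟩)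
  refine ⟨bY.equiv bX f', ?_⟩
  have h1 : bY ⟨y, hym⟩ = y := Module.Basis.extend_apply_self hiy ⟨y, hym⟩
  have h2 : (bY.equiv bX f') (bY ⟨y, hym⟩) = bX (f' ⟨y, hym⟩) := Module.Basis.equiv_apply _ _ _ _
  have h3 : f' ⟨y, hym⟩ = ⟨x, hxm⟩ := by
    simp [f', Equiv.swap_apply_left]
  rw [h1] at h2
  rw [h2, h3]
  exact Module.Basis.extend_apply_self hix ⟨x, hxm⟩

/-- There is an invertible matrix over `GF(2)` sending any nonzero `y` to any nonzero `x`. -/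
lemma exists_unit_matrix (m : ℕ) (x y : Fin m → ZMod 2) (hx : x ≠ 0) (hy : y ≠ 0) :
    ∃ A : (Matrix (Fin m) (Fin m) (ZMod 2))ˣ, Matrix.mulVec (A : Matrix (Fin m) (Fin m) (ZMod 2)) y = x := by
  obtain ⟨e, he⟩ := exists_linEquiv_map m x y hx hy
  refine ⟨⟨LinearMap.toMatrix' (e : (Fin m → ZMod 2) →ₗ[ZMod 2] (Fin m → ZMod 2)),
      LinearMap.toMatrix' (e.symm : (Fin m → ZMod 2) →ₗ[ZMod 2] (Fin m → ZMod 2)), ?_, ?_⟩, ?_⟩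
  · rw [← LinearMap.toMatrix'_comp]
    simp
  · rw [← LinearMap.toMatrix'_comp]
    simp
  · have : Matrix.toLin' (LinearMap.toMatrix'
        (e : (Fin m → ZMod 2) →ₗ[ZMod 2] (Fin m → ZMod 2))) y = e y := by
      rw [Matrix.toLin'_toMatrix']; rfl
    rw [← Matrix.toLin'_apply]
    rw [this, he]

/-- Helper: the per-codeword probability sum (unnormalized). -/
def Sg (n k : ℕ) (x : Fin n → ZMod 2) : ℝ :=
  ∑ H : Matrix (Fin (n - k)) (Fin n) (ZMod 2),
    (if x ∈ nullNZ n k H then 1 / ((nullNZ n k H).card : ℝ) else 0)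

lemma nullNZ_nonempty (n k : ℕ) (hk : 1 ≤ k) (hkn : k < n)
    (H : Matrix (Fin (n - k)) (Fin n) (ZMod 2)) : (nullNZ n k H).Nonempty := by
  by_contra hne
  rw [Finset.not_nonempty_iff_eq_empty] at hne
  have hinj : Function.Injective H.mulVecLin := by
    rw [← LinearMap.ker_eq_bot, LinearMap.ker_eq_bot']
    intro v hv
    by_contra hv0
    have : v ∈ nullNZ n k H := by
      simp only [nullNZ, Finset.mem_filter, Finset.mem_univ, true_and]
      exact ⟨by rw [← Matrix.mulVecLin_apply]; exact hv, hv0⟩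
    rw [hne] at this
    exact absurd this (Finset.notMem_empty v)
  have hle := LinearMap.finrank_le_finrank_of_injective hinj
  simp only [Module.finrank_fin_fun] at hle
  omega

lemma nullNZ_mul_mem (n k : ℕ) (H : Matrix (Fin (n - k)) (Fin n) (ZMod 2))
    (A : (Matrix (Fin n) (Fin n) (ZMod 2))ˣ) (v : Fin n → ZMod 2)
    (hv : v ∈ nullNZ n k (H * (A : Matrix (Fin n) (Fin n) (ZMod 2)))) :
    Matrix.mulVec (A : Matrix (Fin n) (Fin n) (ZMod 2)) v ∈ nullNZ n k H := by
  simp only [nullNZ, Finset.mem_filter, Finset.mem_univ, true_and] at hv ⊢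
  obtain ⟨h1, h2⟩ := hv
  constructor
  · rw [Matrix.mulVec_mulVec]; exact h1
  · intro h0
    apply h2
    have := congrArg (Matrix.mulVec ((A⁻¹ : (Matrix (Fin n) (Fin n) (ZMod 2))ˣ) :
      Matrix (Fin n) (Fin n) (ZMod 2))) h0
    rwa [Matrix.mulVec_mulVec, Units.inv_mul, Matrix.one_mulVec, Matrix.mulVec_zero] at this

lemma nullNZ_mul_card (n k : ℕ) (H : Matrix (Fin (n - k)) (Fin n) (ZMod 2))
    (A : (Matrix (Fin n) (Fin n) (ZMod 2))ˣ) :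
    (nullNZ n k (H * (A : Matrix (Fin n) (Fin n) (ZMod 2)))).card = (nullNZ n k H).card := by
  have hinv : H = (H * (A : Matrix (Fin n) (Fin n) (ZMod 2))) *
      ((A⁻¹ : (Matrix (Fin n) (Fin n) (ZMod 2))ˣ) : Matrix (Fin n) (Fin n) (ZMod 2)) := by
    rw [Matrix.mul_assoc, Units.mul_inv, Matrix.mul_one]
  refine Finset.card_bij'
    (fun v _ => Matrix.mulVec (A : Matrix (Fin n) (Fin n) (ZMod 2)) v)
    (fun w _ => Matrix.mulVec ((A⁻¹ : (Matrix (Fin n) (Fin n) (ZMod 2))ˣ) :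
      Matrix (Fin n) (Fin n) (ZMod 2)) w)
    (fun v hv => nullNZ_mul_mem n k H A v hv)
    (fun w hw => ?_) (fun v _ => ?_) (fun w _ => ?_)
  · have := nullNZ_mul_mem n k (H * (A : Matrix (Fin n) (Fin n) (ZMod 2))) A⁻¹ w (by rwa [← hinv])
    simpa [← hinv] using this
  · show Matrix.mulVec _ (Matrix.mulVec _ v) = v
    rw [Matrix.mulVec_mulVec, Units.inv_mul, Matrix.one_mulVec]
  · show Matrix.mulVec _ (Matrix.mulVec _ w) = w
    rw [Matrix.mulVec_mulVec, Units.mul_inv, Matrix.one_mulVec]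

lemma Sg_const (n k : ℕ) (x y : Fin n → ZMod 2) (hx : x ≠ 0) (hy : y ≠ 0) :
    Sg n k x = Sg n k y := by
  obtain ⟨A, hA⟩ := exists_unit_matrix n x y hx hy
  have hAinv : ∀ H : Matrix (Fin (n - k)) (Fin n) (ZMod 2), H = (H * (A : Matrix (Fin n) (Fin n) (ZMod 2))) *
      ((A⁻¹ : (Matrix (Fin n) (Fin n) (ZMod 2))ˣ) : Matrix (Fin n) (Fin n) (ZMod 2)) := by
    intro H; rw [Matrix.mul_assoc, Units.mul_inv, Matrix.mul_one]
  let e : Matrix (Fin (n - k)) (Fin n) (ZMod 2) ≃ Matrix (Fin (n - k)) (Fin n) (ZMod 2) :=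
    { toFun := fun H => H * (A : Matrix (Fin n) (Fin n) (ZMod 2)),
      invFun := fun H => H * ((A⁻¹ : (Matrix (Fin n) (Fin n) (ZMod 2))ˣ) :
        Matrix (Fin n) (Fin n) (ZMod 2)),
      left_inv := fun H => by
        show H * _ * _ = H
        rw [Matrix.mul_assoc, Units.mul_inv, Matrix.mul_one],
      right_inv := fun H => by
        show H * _ * _ = H
        rw [Matrix.mul_assoc, Units.inv_mul, Matrix.mul_one] }
  have hmem : ∀ H : Matrix (Fin (n - k)) (Fin n) (ZMod 2),
      (y ∈ nullNZ n k (H * (A : Matrix (Fin n) (Fin n) (ZMod 2))) ↔ x ∈ nullNZ n k H) := by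
    intro H
    constructor
    · intro h
      have := nullNZ_mul_mem n k H A y h
      rwa [hA] at this
    · intro h
      simp only [nullNZ, Finset.mem_filter, Finset.mem_univ, true_and] at h ⊢
      refine ⟨?_, hy⟩
      rw [← Matrix.mulVec_mulVec, hA]
      exact h.1
  unfold Sg
  refine Fintype.sum_equiv e _ _ ?_
  intro H
  show (if x ∈ nullNZ n k H then 1 / ((nullNZ n k H).card : ℝ) else 0) =
    (if y ∈ nullNZ n k (H * (A : Matrix (Fin n) (Fin n) (ZMod 2))) then
      1 / ((nullNZ n k (H * (A : Matrix (Fin n) (Fin n) (ZMod 2)))).card : ℝ) else 0)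
  rw [nullNZ_mul_card n k H A]
  by_cases hxH : x ∈ nullNZ n k H
  · rw [if_pos hxH, if_pos ((hmem H).mpr hxH)]
  · rw [if_neg hxH, if_neg (fun h => hxH ((hmem H).mp h))]

lemma Sg_total (n k : ℕ) (hk : 1 ≤ k) (hkn : k < n) :
    ∑ y ∈ Finset.univ.filter (fun y : Fin n → ZMod 2 => y ≠ 0), Sg n k y =
      (2 : ℝ) ^ ((n - k) * n) := by
  unfold Sg
  rw [Finset.sum_comm]
  have hinner : ∀ H : Matrix (Fin (n - k)) (Fin n) (ZMod 2),
      ∑ y ∈ Finset.univ.filter (fun y : Fin n → ZMod 2 => y ≠ 0),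
        (if y ∈ nullNZ n k H then 1 / ((nullNZ n k H).card : ℝ) else 0) = 1 := by
    intro H
    rw [Finset.sum_ite_mem]
    have hsub : Finset.univ.filter (fun y : Fin n → ZMod 2 => y ≠ 0) ∩ nullNZ n k H =
        nullNZ n k H := by
      apply Finset.inter_eq_right.mpr
      intro v hv
      simp only [nullNZ, Finset.mem_filter, Finset.mem_univ, true_and] at hv ⊢
      exact hv.2
    rw [hsub, Finset.sum_const, nsmul_eq_mul]
    have hcard : ((nullNZ n k H).card : ℝ) ≠ 0 := by
      have := nullNZ_nonempty n k hk hkn H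
      simpa [Finset.card_ne_zero] using Finset.Nonempty.card_pos this |>.ne'
    field_simp
  rw [Finset.sum_congr rfl (fun H _ => hinner H), Finset.sum_const, nsmul_eq_mul, mul_one]
  have : Fintype.card (Matrix (Fin (n - k)) (Fin n) (ZMod 2)) = 2 ^ ((n - k) * n) := by
    have hc : Fintype.card (Matrix (Fin (n - k)) (Fin n) (ZMod 2)) =
        Fintype.card (Fin (n - k) → Fin n → ZMod 2) :=
      Fintype.card_congr (Matrix.of).symm
    rw [hc]
    simp only [Fintype.card_fun, ZMod.card, Fintype.card_fin]
    rw [← pow_mul, Nat.mul_comm]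
  rw [Finset.card_univ, this]
  push_cast
  ring

/-- under the Gallager parity-check ensemble with parameters `n`, `k`
(`1 ≤ k < n`), the transmitted codeword `X^n(q)` is uniform over the nonzero vectors of
`GF(2)^n`.  The parity-check matrix `H` is uniform over all `(n-k) × n` matrices over
`GF(2)`; given `H`, the message `q` is uniform on `{1, ..., 2^{n-rank(H)}-1}` and
`X^n(q)` is the `q`-th null-space vector in lexicographic order, so that given `H` the
codeword `X^n(q)` is uniform over the nonzero null-space vectors of `H`.  Hence for
every nonzero `x`, `Pr{X^n(q) = x}` equals the displayed sum, and the claim is that it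
equals `1/(2^n - 1)`. -/
theorem gallager_codeword_uniform (n k : ℕ) (hk : 1 ≤ k) (hkn : k < n)
    (x : Fin n → ZMod 2) (hx : x ≠ 0) :
    (∑ H : Matrix (Fin (n - k)) (Fin n) (ZMod 2),
        (1 / (2 : ℝ) ^ ((n - k) * n)) *
          (if x ∈ nullNZ n k H then 1 / ((nullNZ n k H).card : ℝ) else 0)) =
      1 / ((2 : ℝ) ^ n - 1) := by
  have hn : 0 < n := lt_of_le_of_lt (Nat.zero_le k) hkn
  have hsum : (∑ H : Matrix (Fin (n - k)) (Fin n) (ZMod 2),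
        (1 / (2 : ℝ) ^ ((n - k) * n)) *
          (if x ∈ nullNZ n k H then 1 / ((nullNZ n k H).card : ℝ) else 0)) =
      (1 / (2 : ℝ) ^ ((n - k) * n)) * Sg n k x := by
    rw [Sg, Finset.mul_sum]
  rw [hsum]
  -- total over nonzero y is constant times the count of nonzero vectors
  have hconst : ∑ y ∈ Finset.univ.filter (fun y : Fin n → ZMod 2 => y ≠ 0), Sg n k y =
      ((2 : ℝ) ^ n - 1) * Sg n k x := by
    rw [Finset.sum_congr rfl (fun y hy => (Sg_const n k x y hx
      (by simpa using (Finset.mem_filter.mp hy).2)).symm), Finset.sum_const, nsmul_eq_mul]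
    congr 1
    rw [Finset.filter_ne', Finset.card_erase_of_mem (Finset.mem_univ _), Finset.card_univ]
    have : Fintype.card (Fin n → ZMod 2) = 2 ^ n := by simp [Fintype.card_fun, ZMod.card]
    rw [this]
    have h1 : (1 : ℕ) ≤ 2 ^ n := Nat.one_le_two_pow
    push_cast [h1]
    ring
  have hkey := Sg_total n k hk hkn
  rw [hconst] at hkey
  have h2n : ((2 : ℝ) ^ n - 1) ≠ 0 := by
    have : (1 : ℝ) < 2 ^ n := by
      exact one_lt_pow₀ (by norm_num) hn.ne'
    linarith
  have hpow : ((2 : ℝ) ^ ((n - k) * n)) ≠ 0 := by positivity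
  have hSx : Sg n k x = (2 : ℝ) ^ ((n - k) * n) / ((2 : ℝ) ^ n - 1) := by
    field_simp at hkey ⊢
    linarith [hkey]
  rw [hSx]
  field_simp
end
end

section
/- (Theorem 3) For every block length n, every type t on X with T^n_t nonempty, every positive integer k, and every delta > 0: P_err(t,n,k,delta) <= P_{t,delta} + e^{-n ( I(t;P) - delta - R ) + n H(t) - ln |T^n_t|}, where R = (k/n) ln 2. -/
open scoped Classical BigOperators
open Finset

noncomputable section

/-- A discrete memoryless channel with finite input alphabet `X` and finite output
alphabet `Y`: transition probabilities `p x y = p(y|x)` with rows summing to one. -/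
structure DIMC (X Y : Type) [Fintype X] [Fintype Y] where
  p : X → Y → ℝ
  p_nonneg : ∀ x y, 0 ≤ p x y
  p_sum : ∀ x, ∑ y, p x y = 1

/-- `t` is a type (an empirical distribution with denominator `n`) on `X`. -/
def IsType {X : Type} [Fintype X] (n : ℕ) (t : X → ℝ) : Prop :=
  (∀ x, 0 ≤ t x) ∧ (∑ x, t x = 1) ∧ ∀ x, ∃ m : ℕ, t x * n = m

/-- `T^n_t`: the set of sequences of length `n` with empirical distribution `t`. -/
def typeClass {X : Type} [Fintype X] (n : ℕ) (t : X → ℝ) : Finset (Fin n → X) :=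
  Finset.univ.filter fun xv =>
    ∀ x, ((Finset.univ.filter fun i => xv i = x).card : ℝ) = (n : ℝ) * t x

/-- Entropy `H(t)` of a distribution on `X` (in nats). -/
def typeEnt {X : Type} [Fintype X] (t : X → ℝ) : ℝ := -∑ x, t x * Real.log (t x)

namespace DIMC

variable {X Y : Type} [Fintype X] [Fintype Y] (W : DIMC X Y)

/-- Output distribution `q_t` induced by input distribution `t`. -/
def qOut (t : X → ℝ) (y : Y) : ℝ := ∑ x, t x * W.p x y

/-- Mutual information `I(t;P)` (with the convention `0 ln 0 = 0`). -/
def mutInfo (t : X → ℝ) : ℝ :=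
  ∑ x, t x * ∑ y, W.p x y * Real.log (W.p x y / W.qOut t y)

/-- The DIMC jar based on type `t`. -/
def dJar (n : ℕ) (t : X → ℝ) (δ : ℝ) (yv : Fin n → Y) : Finset (Fin n → X) :=
  (typeClass n t).filter fun xv =>
    0 < (∏ i, W.p (xv i) (yv i)) ∧
      -(1 / (n : ℝ)) * ∑ i, Real.log (W.p (xv i) (yv i) / W.qOut t (yv i)) <
        -W.mutInfo t + δ

/-- `P_{t,δ}`, expressed as a function of the transmitted sequence `xv` (it depends on
`xv` only through its type `t`). -/
def Ptd (n : ℕ) (t : X → ℝ) (δ : ℝ) (xv : Fin n → X) : ℝ :=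
  ∑ yv : Fin n → Y,
    (∏ i, W.p (xv i) (yv i)) *
      (if -W.mutInfo t + δ ≤
          -(1 / (n : ℝ)) * ∑ i, Real.log (W.p (xv i) (yv i) / W.qOut t (yv i))
        then 1 else 0)

/-- Jar-decoding error probability for the Shannon random code ensemble with fixed
codeword type `t`: the `2^k` codewords are i.i.d. uniform on `T^n_t`, the message is
uniform, and the channel acts memorylessly. -/
def PerrT (n k : ℕ) (t : X → ℝ) (δ : ℝ) : ℝ :=
  ∑ cb : Fin (2 ^ k) → Fin n → X, ∑ q : Fin (2 ^ k), ∑ yv : Fin n → Y,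
    (∏ j, if cb j ∈ typeClass n t then 1 / ((typeClass n t).card : ℝ) else 0) *
      ((1 / (2 ^ k : ℝ)) *
        ((∏ i, W.p (cb q i) (yv i)) *
          (if cb q ∉ W.dJar n t δ yv ∨ ∃ j, cb j ≠ cb q ∧ cb j ∈ W.dJar n t δ yv
            then 1 else 0)))

end DIMC

section Aux
variable {X Y : Type} [Fintype X] [Fintype Y]

lemma ch_nonneg (W : DIMC X Y) {n : ℕ} (z : Fin n → X) (yv : Fin n → Y) :
    0 ≤ ∏ i, W.p (z i) (yv i) :=
  Finset.prod_nonneg fun i _ => W.p_nonneg _ _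

lemma ch_sum (W : DIMC X Y) {n : ℕ} (z : Fin n → X) :
    ∑ yv : Fin n → Y, ∏ i, W.p (z i) (yv i) = 1 := by
  rw [← Fintype.piFinset_univ, ← Finset.prod_univ_sum]
  simp [W.p_sum]

lemma sum_fn_prod {m : ℕ} {A : Type} [Fintype A] (g : Fin m → A → ℝ) :
    ∑ f : Fin m → A, ∏ j, g j (f j) = ∏ j, ∑ a, g j a := by
  rw [Finset.prod_univ_sum, Fintype.piFinset_univ]

lemma mem_typeClass {n : ℕ} {t : X → ℝ} {z : Fin n → X} :
    z ∈ typeClass n t ↔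
      ∀ x, ((Finset.univ.filter fun i => z i = x).card : ℝ) = (n : ℝ) * t x := by
  simp [typeClass]

lemma t_pos_of_mem {n : ℕ} {t : X → ℝ} {z : Fin n → X} (hz : z ∈ typeClass n t)
    (hn : 0 < n) (i : Fin n) : 0 < t (z i) := by
  have h := (mem_typeClass.1 hz) (z i)
  have hmem : i ∈ Finset.univ.filter fun j => z j = z i := by simp
  have hcard : 0 < (Finset.univ.filter fun j => z j = z i).card :=
    Finset.card_pos.2 ⟨i, hmem⟩
  have : (0 : ℝ) < (n : ℝ) * t (z i) := by
    rw [← h]; exact_mod_cast hcard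
  have hn' : (0:ℝ) < n := by exact_mod_cast hn
  nlinarith

lemma prod_t_eq_exp {n : ℕ} {t : X → ℝ} (ht : IsType n t) {z : Fin n → X}
    (hz : z ∈ typeClass n t) :
    ∏ i, t (z i) = Real.exp (-(n : ℝ) * typeEnt t) := by
  have hfib : ∏ x : X, ∏ i ∈ Finset.univ.filter fun i => z i = x, t (z i)
      = ∏ i, t (z i) :=
    Finset.prod_fiberwise_of_maps_to (fun i _ => Finset.mem_univ (z i)) _
  have hpow : ∀ x : X, (∏ i ∈ Finset.univ.filter fun i => z i = x, t (z i))
      = t x ^ ((Finset.univ.filter fun i => z i = x).card) := by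
    intro x
    rw [Finset.prod_congr rfl (fun i hi => by
      rw [(Finset.mem_filter.1 hi).2]), Finset.prod_const]
  have hent : Real.exp (-(n : ℝ) * typeEnt t)
      = ∏ x : X, Real.exp ((n : ℝ) * t x * Real.log (t x)) := by
    rw [← Real.exp_sum]
    congr 1
    rw [typeEnt, neg_mul_neg, Finset.mul_sum]
    exact Finset.sum_congr rfl fun x _ => by ring
  rw [← hfib, hent]
  refine Finset.prod_congr rfl fun x _ => ?_
  rw [hpow x]
  have hc := (mem_typeClass.1 hz) x
  rcases eq_or_lt_of_le (ht.1 x) with h0 | hpos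
  · have : ((Finset.univ.filter fun i => z i = x).card : ℝ) = 0 := by
      rw [hc, ← h0]; ring
    have hcz : (Finset.univ.filter fun i => z i = x).card = 0 := by exact_mod_cast this
    simp [hcz, ← h0]
  · have : ((Finset.univ.filter fun i => z i = x).card : ℝ) * Real.log (t x)
        = (n : ℝ) * t x * Real.log (t x) := by rw [hc]
    rw [← this, mul_comm ((Finset.univ.filter fun i => z i = x).card : ℝ),
      mul_comm, Real.exp_nat_mul, Real.exp_log hpos]

lemma qOut_pos (W : DIMC X Y) {n : ℕ} (hn : 0 < n) {t : X → ℝ} (ht : IsType n t)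
    {z : Fin n → X} (hz : z ∈ typeClass n t) {yv : Fin n → Y}
    (hp : ∀ i, 0 < W.p (z i) (yv i)) (i : Fin n) : 0 < W.qOut t (yv i) := by
  have h1 : t (z i) * W.p (z i) (yv i) ≤ W.qOut t (yv i) :=
    Finset.single_le_sum (f := fun x => t x * W.p x (yv i))
      (fun x _ => mul_nonneg (ht.1 x) (W.p_nonneg x _)) (Finset.mem_univ (z i))
  exact lt_of_lt_of_le (mul_pos (t_pos_of_mem hz hn i) (hp i)) h1

lemma p_pos_of_prod {W : DIMC X Y} {n : ℕ} {z : Fin n → X} {yv : Fin n → Y}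
    (h : 0 < ∏ i, W.p (z i) (yv i)) (i : Fin n) : 0 < W.p (z i) (yv i) := by
  rcases eq_or_lt_of_le (W.p_nonneg (z i) (yv i)) with h0 | h0
  · exfalso
    rw [Finset.prod_eq_zero (Finset.mem_univ i) h0.symm] at h
    exact lt_irrefl 0 h
  · exact h0

lemma jar_prod_gt (W : DIMC X Y) {n : ℕ} (hn : 0 < n) {t : X → ℝ} (ht : IsType n t)
    {δ : ℝ} {yv : Fin n → Y} {z : Fin n → X} (hz : z ∈ W.dJar n t δ yv) :
    Real.exp ((n : ℝ) * (W.mutInfo t - δ)) * ∏ i, W.qOut t (yv i) <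
      ∏ i, W.p (z i) (yv i) := by
  obtain ⟨hzT, hzprod, hzlt⟩ := Finset.mem_filter.1 hz
  have hp : ∀ i, 0 < W.p (z i) (yv i) := p_pos_of_prod hzprod
  have hq : ∀ i, 0 < W.qOut t (yv i) := qOut_pos W hn ht hzT hp
  have hQ : 0 < ∏ i, W.qOut t (yv i) := Finset.prod_pos fun i _ => hq i
  have hn' : (0 : ℝ) < n := by exact_mod_cast hn
  have hS : (n : ℝ) * (W.mutInfo t - δ) <
      ∑ i, Real.log (W.p (z i) (yv i) / W.qOut t (yv i)) := by
    set S := ∑ i, Real.log (W.p (z i) (yv i) / W.qOut t (yv i))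
    have := mul_lt_mul_of_pos_left hzlt hn'
    rw [mul_comm] at this
    have h2 : -(1 / (n : ℝ)) * S * (n : ℝ) = -S := by
      field_simp
    nlinarith [this]
  have hlog : ∑ i, Real.log (W.p (z i) (yv i) / W.qOut t (yv i))
      = Real.log ((∏ i, W.p (z i) (yv i)) / ∏ i, W.qOut t (yv i)) := by
    rw [← Finset.prod_div_distrib, Real.log_prod]
    intro i _
    exact ne_of_gt (div_pos (hp i) (hq i))
  rw [hlog] at hS
  have hratio : 0 < (∏ i, W.p (z i) (yv i)) / ∏ i, W.qOut t (yv i) :=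
    div_pos hzprod hQ
  have := (Real.lt_log_iff_exp_lt hratio).1 hS
  calc Real.exp ((n : ℝ) * (W.mutInfo t - δ)) * ∏ i, W.qOut t (yv i)
      < ((∏ i, W.p (z i) (yv i)) / ∏ i, W.qOut t (yv i)) * ∏ i, W.qOut t (yv i) :=
        mul_lt_mul_of_pos_right this hQ
    _ = ∏ i, W.p (z i) (yv i) := div_mul_cancel₀ _ (ne_of_gt hQ)

lemma jar_card_bound (W : DIMC X Y) {n : ℕ} (hn : 0 < n) {t : X → ℝ} (ht : IsType n t)
    (δ : ℝ) (yv : Fin n → Y) :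
    ((W.dJar n t δ yv).card : ℝ) ≤
      Real.exp ((n : ℝ) * typeEnt t - (n : ℝ) * (W.mutInfo t - δ)) := by
  rcases (W.dJar n t δ yv).eq_empty_or_nonempty with he | ⟨z0, hz0⟩
  · rw [he]; simpa using (Real.exp_pos _).le
  · obtain ⟨hz0T, hz0prod, _⟩ := Finset.mem_filter.1 hz0
    have hp0 : ∀ i, 0 < W.p (z0 i) (yv i) := p_pos_of_prod hz0prod
    have hq : ∀ i, 0 < W.qOut t (yv i) := qOut_pos W hn ht hz0T hp0
    have hQ : 0 < ∏ i, W.qOut t (yv i) := Finset.prod_pos fun i _ => hq i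
    set Q := ∏ i, W.qOut t (yv i) with hQdef
    have htot : ∑ z : Fin n → X, ∏ i, t (z i) * W.p (z i) (yv i) = Q := by
      rw [sum_fn_prod fun i a => t a * W.p a (yv i)]
      rfl
    set B := Real.exp (-(n : ℝ) * typeEnt t) * (Real.exp ((n : ℝ) * (W.mutInfo t - δ)) * Q)
      with hBdef
    have hlow : ∀ z ∈ W.dJar n t δ yv, B ≤ ∏ i, t (z i) * W.p (z i) (yv i) := by
      intro z hz
      have hzT : z ∈ typeClass n t := (Finset.mem_filter.1 hz).1
      have : ∏ i, t (z i) * W.p (z i) (yv i)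
          = (∏ i, t (z i)) * ∏ i, W.p (z i) (yv i) := Finset.prod_mul_distrib
      rw [this, prod_t_eq_exp ht hzT]
      exact mul_le_mul_of_nonneg_left (jar_prod_gt W hn ht hz).le (Real.exp_pos _).le
    have hcard : ((W.dJar n t δ yv).card : ℝ) * B ≤ Q := by
      have h1 := Finset.card_nsmul_le_sum (W.dJar n t δ yv)
        (fun z => ∏ i, t (z i) * W.p (z i) (yv i)) B hlow
      rw [nsmul_eq_mul] at h1
      refine h1.trans ?_
      rw [← htot]
      refine Finset.sum_le_sum_of_subset_of_nonneg (Finset.subset_univ _) ?_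
      intro z _ _
      exact Finset.prod_nonneg fun i _ => mul_nonneg (ht.1 (z i)) (W.p_nonneg _ _)
    have hBpos : 0 < B := by positivity
    rw [hBdef] at hcard
    have hEpos : (0:ℝ) < Real.exp (-(n : ℝ) * typeEnt t) * Real.exp ((n : ℝ) * (W.mutInfo t - δ)) := by positivity
    have h2 : ((W.dJar n t δ yv).card : ℝ) *
        (Real.exp (-(n : ℝ) * typeEnt t) * Real.exp ((n : ℝ) * (W.mutInfo t - δ))) ≤ 1 := by
      have h3 : ((W.dJar n t δ yv).card : ℝ) *
          (Real.exp (-(n : ℝ) * typeEnt t) * Real.exp ((n : ℝ) * (W.mutInfo t - δ))) * Q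
          ≤ 1 * Q := by rw [one_mul]; nlinarith [hcard]
      exact le_of_mul_le_mul_right h3 hQ
    have h4 : ((W.dJar n t δ yv).card : ℝ) ≤
        1 / (Real.exp (-(n : ℝ) * typeEnt t) * Real.exp ((n : ℝ) * (W.mutInfo t - δ))) :=
      (le_div_iff₀ hEpos).2 h2
    refine h4.trans_eq ?_
    rw [← Real.exp_add, one_div, ← Real.exp_neg]
    ring_nf

lemma exists_perm_of_typeClass {n : ℕ} {t : X → ℝ} {z xv : Fin n → X}
    (hz : z ∈ typeClass n t) (hx : xv ∈ typeClass n t) :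
    ∃ σ : Equiv.Perm (Fin n), ∀ i, xv (σ i) = z i := by
  have hcard : ∀ c : X, Fintype.card {i // z i = c} = Fintype.card {i // xv i = c} := by
    intro c
    rw [Fintype.card_subtype, Fintype.card_subtype]
    have h1 := (mem_typeClass.1 hz) c
    have h2 := (mem_typeClass.1 hx) c
    exact_mod_cast h1.trans h2.symm
  refine ⟨Equiv.ofFiberEquiv (f := z) (g := xv)
    (fun c => Fintype.equivOfCardEq (hcard c)), ?_⟩
  intro i
  exact Equiv.ofFiberEquiv_map _ i

lemma Ptd_invariant (W : DIMC X Y) {n : ℕ} {t : X → ℝ} (δ : ℝ) {z xv : Fin n → X}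
    (hz : z ∈ typeClass n t) (hx : xv ∈ typeClass n t) :
    W.Ptd n t δ z = W.Ptd n t δ xv := by
  obtain ⟨σ, hσ⟩ := exists_perm_of_typeClass hz hx
  unfold DIMC.Ptd
  rw [← Equiv.sum_comp (Equiv.arrowCongr σ (Equiv.refl Y))
    (fun yv => (∏ i, W.p (xv i) (yv i)) *
      (if -W.mutInfo t + δ ≤
          -(1 / (n : ℝ)) * ∑ i, Real.log (W.p (xv i) (yv i) / W.qOut t (yv i))
        then 1 else 0))]
  refine Finset.sum_congr rfl fun w _ => ?_
  have hEw : ∀ j, (Equiv.arrowCongr σ (Equiv.refl Y)) w j = w (σ.symm j) := by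
    intro j; simp [Equiv.arrowCongr_apply]
  have hprod : ∏ i, W.p (z i) (w i)
      = ∏ j, W.p (xv j) ((Equiv.arrowCongr σ (Equiv.refl Y)) w j) := by
    rw [← Equiv.prod_comp σ (fun j => W.p (xv j) ((Equiv.arrowCongr σ (Equiv.refl Y)) w j))]
    refine Finset.prod_congr rfl fun i _ => ?_
    rw [hEw (σ i), Equiv.symm_apply_apply, hσ i]
  have hsum : ∑ i, Real.log (W.p (z i) (w i) / W.qOut t (w i))
      = ∑ j, Real.log (W.p (xv j) ((Equiv.arrowCongr σ (Equiv.refl Y)) w j) /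
          W.qOut t ((Equiv.arrowCongr σ (Equiv.refl Y)) w j)) := by
    rw [← Equiv.sum_comp σ (fun j => Real.log (W.p (xv j) ((Equiv.arrowCongr σ (Equiv.refl Y)) w j) /
          W.qOut t ((Equiv.arrowCongr σ (Equiv.refl Y)) w j)))]
    refine Finset.sum_congr rfl fun i _ => ?_
    rw [hEw (σ i), Equiv.symm_apply_apply, hσ i]
  rw [hprod, hsum]

lemma sum_ch_notJar (W : DIMC X Y) {n : ℕ} {t : X → ℝ} (δ : ℝ) {z : Fin n → X}
    (hz : z ∈ typeClass n t) :
    ∑ yv : Fin n → Y, (∏ i, W.p (z i) (yv i)) *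
        (if z ∉ W.dJar n t δ yv then 1 else 0) = W.Ptd n t δ z := by
  unfold DIMC.Ptd
  refine Finset.sum_congr rfl fun yv _ => ?_
  rcases eq_or_lt_of_le (ch_nonneg W z yv) with h0 | h0
  · rw [← h0, zero_mul, zero_mul]
  · congr 1
    have hmem : z ∈ W.dJar n t δ yv ↔
        -(1 / (n : ℝ)) * ∑ i, Real.log (W.p (z i) (yv i) / W.qOut t (yv i)) <
          -W.mutInfo t + δ := by
      rw [DIMC.dJar, Finset.mem_filter]
      constructor
      · rintro ⟨_, _, h⟩; exact h
      · intro h; exact ⟨hz, h0, h⟩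
    by_cases hin : z ∈ W.dJar n t δ yv
    · rw [if_neg (by simp [hin]), if_neg (not_le.2 (hmem.1 hin))]
    · rw [if_pos hin, if_pos (le_of_not_gt (fun hlt => hin (hmem.2 hlt)))]

lemma prod_two_point {m : ℕ} {q j : Fin m} (hne : j ≠ q) (h : Fin m → ℝ)
    (h1 : ∀ j', j' ≠ q → j' ≠ j → h j' = 1) : ∏ j', h j' = h q * h j := by
  rw [← Finset.mul_prod_erase Finset.univ h (Finset.mem_univ q),
    ← Finset.mul_prod_erase _ h (Finset.mem_erase.2 ⟨hne, Finset.mem_univ j⟩)]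
  have : ∏ x ∈ (Finset.univ.erase q).erase j, h x = 1 := by
    refine Finset.prod_eq_one fun j' hj' => ?_
    obtain ⟨hj'1, hj'2⟩ := Finset.mem_erase.1 hj'
    exact h1 j' (Finset.mem_erase.1 hj'2).1 hj'1
  rw [this, mul_one]

lemma sum_cb_one {m : ℕ} {A : Type} [Fintype A] {u : A → ℝ}
    (husum : ∑ a, u a = 1) (F : A → ℝ) (q : Fin m) :
    ∑ cb : Fin m → A, (∏ j, u (cb j)) * F (cb q) = ∑ a, u a * F a := by
  have hrw : ∀ cb : Fin m → A, (∏ j, u (cb j)) * F (cb q)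
      = ∏ j, (u (cb j) * if j = q then F (cb j) else 1) := by
    intro cb
    rw [Finset.prod_mul_distrib, Finset.prod_ite_eq' Finset.univ q (fun j => F (cb j)),
      if_pos (Finset.mem_univ q)]
  rw [Finset.sum_congr rfl fun cb _ => hrw cb,
    sum_fn_prod (fun j a => u a * if j = q then F a else 1)]
  have hfac : ∀ j : Fin m, (∑ a, u a * if j = q then F a else 1)
      = if j = q then ∑ a, u a * F a else 1 := by
    intro j
    by_cases hj : j = q
    · simp [hj]
    · simp [hj, husum]
  rw [Finset.prod_congr rfl fun j _ => hfac j,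
    Finset.prod_ite_eq' Finset.univ q (fun _ => ∑ a, u a * F a),
    if_pos (Finset.mem_univ q)]

lemma sum_cb_two {m : ℕ} {A : Type} [Fintype A] {u : A → ℝ}
    (husum : ∑ a, u a = 1) (F G : A → ℝ) {q j : Fin m} (hne : j ≠ q) :
    ∑ cb : Fin m → A, (∏ j', u (cb j')) * (F (cb q) * G (cb j))
      = (∑ a, u a * F a) * (∑ a, u a * G a) := by
  have hrw : ∀ cb : Fin m → A, (∏ j', u (cb j')) * (F (cb q) * G (cb j))
      = ∏ j', (u (cb j') * if j' = q then F (cb j') else if j' = j then G (cb j') else 1) := by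
    intro cb
    rw [Finset.prod_mul_distrib]
    congr 1
    rw [prod_two_point hne _ (fun j' h1 h2 => by simp [h1, h2]),
      if_pos rfl, if_neg hne, if_pos rfl]
  rw [Finset.sum_congr rfl fun cb _ => hrw cb,
    sum_fn_prod (fun j' a => u a * if j' = q then F a else if j' = j then G a else 1)]
  have hfac : ∀ j' : Fin m, (∑ a, u a * if j' = q then F a else if j' = j then G a else 1)
      = if j' = q then ∑ a, u a * F a else if j' = j then ∑ a, u a * G a else 1 := by
    intro j'
    by_cases h1 : j' = q
    · simp [h1]
    · by_cases h2 : j' = j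
      · simp [h1, h2]
      · simp [h1, h2, husum]
  rw [Finset.prod_congr rfl fun j' _ => hfac j',
    prod_two_point hne _ (fun j' h1 h2 => by simp [h1, h2]),
    if_pos rfl, if_neg hne, if_pos rfl]

lemma u_sum {n : ℕ} {t : X → ℝ} (hT : (typeClass n t).Nonempty) :
    ∑ z : Fin n → X, (if z ∈ typeClass n t then 1 / ((typeClass n t).card : ℝ) else 0)
      = 1 := by
  have hN : (0 : ℝ) < ((typeClass n t).card : ℝ) := by
    exact_mod_cast Finset.card_pos.2 hT
  rw [Finset.sum_ite_mem, Finset.univ_inter, Finset.sum_const, nsmul_eq_mul]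
  field_simp

lemma part1_eq (W : DIMC X Y) {n : ℕ} {t : X → ℝ} (hT : (typeClass n t).Nonempty)
    (k : ℕ) (δ : ℝ) {xv : Fin n → X} (hxv : xv ∈ typeClass n t) :
    ∑ cb : Fin (2 ^ k) → Fin n → X, ∑ q : Fin (2 ^ k), ∑ yv : Fin n → Y,
      (∏ j, if cb j ∈ typeClass n t then 1 / ((typeClass n t).card : ℝ) else 0) *
        ((1 / (2 ^ k : ℝ)) * ((∏ i, W.p (cb q i) (yv i)) *
          (if cb q ∉ W.dJar n t δ yv then 1 else 0)))
    = W.Ptd n t δ xv := by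
  set u : (Fin n → X) → ℝ :=
    fun z => if z ∈ typeClass n t then 1 / ((typeClass n t).card : ℝ) else 0 with hu
  have husum : ∑ a : Fin n → X, u a = 1 := u_sum hT
  have hM : ((2 : ℝ) ^ k) ≠ 0 := by positivity
  rw [Finset.sum_comm]
  have hq : ∀ q : Fin (2 ^ k),
      (∑ cb : Fin (2 ^ k) → Fin n → X, ∑ yv : Fin n → Y,
        (∏ j, u (cb j)) * ((1 / (2 ^ k : ℝ)) * ((∏ i, W.p (cb q i) (yv i)) *
          (if cb q ∉ W.dJar n t δ yv then 1 else 0))))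
      = (1 / (2 ^ k : ℝ)) * W.Ptd n t δ xv := by
    intro q
    rw [Finset.sum_comm]
    have hyv : ∀ yv : Fin n → Y,
        (∑ cb : Fin (2 ^ k) → Fin n → X,
          (∏ j, u (cb j)) * ((1 / (2 ^ k : ℝ)) * ((∏ i, W.p (cb q i) (yv i)) *
            (if cb q ∉ W.dJar n t δ yv then 1 else 0))))
        = (1 / (2 ^ k : ℝ)) * ∑ a : Fin n → X, u a * ((∏ i, W.p (a i) (yv i)) *
            (if a ∉ W.dJar n t δ yv then 1 else 0)) := by
      intro yv
      rw [← sum_cb_one husum (fun a => (∏ i, W.p (a i) (yv i)) *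
        (if a ∉ W.dJar n t δ yv then 1 else 0)) q, Finset.mul_sum]
      exact Finset.sum_congr rfl fun cb _ => by ring
    rw [Finset.sum_congr rfl fun yv _ => hyv yv, ← Finset.mul_sum]
    congr 1
    rw [Finset.sum_comm]
    have ha : ∀ a : Fin n → X,
        (∑ yv : Fin n → Y, u a * ((∏ i, W.p (a i) (yv i)) *
          (if a ∉ W.dJar n t δ yv then 1 else 0)))
        = u a * W.Ptd n t δ xv := by
      intro a
      rw [← Finset.mul_sum]
      by_cases haT : a ∈ typeClass n t
      · rw [sum_ch_notJar W δ haT, Ptd_invariant W δ haT hxv]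
      · rw [hu]; simp [haT]
    rw [Finset.sum_congr rfl fun a _ => ha a, ← Finset.sum_mul, husum, one_mul]
  rw [Finset.sum_congr rfl fun q _ => hq q, Finset.sum_const, Finset.card_univ,
    Fintype.card_fin, nsmul_eq_mul]
  push_cast
  field_simp

lemma part2_bound (W : DIMC X Y) {n : ℕ} (hn : 0 < n) {t : X → ℝ} (ht : IsType n t)
    (hT : (typeClass n t).Nonempty) (k : ℕ) (δ : ℝ) :
    ∑ cb : Fin (2 ^ k) → Fin n → X, ∑ q : Fin (2 ^ k), ∑ yv : Fin n → Y,
      (∏ j, if cb j ∈ typeClass n t then 1 / ((typeClass n t).card : ℝ) else 0) *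
        ((1 / (2 ^ k : ℝ)) * ((∏ i, W.p (cb q i) (yv i)) *
          (∑ j, if j ≠ q then (if cb j ∈ W.dJar n t δ yv then 1 else 0) else 0)))
    ≤ (2 ^ k : ℝ) * ((1 / ((typeClass n t).card : ℝ)) *
        Real.exp ((n : ℝ) * typeEnt t - (n : ℝ) * (W.mutInfo t - δ))) := by
  set u : (Fin n → X) → ℝ :=
    fun z => if z ∈ typeClass n t then 1 / ((typeClass n t).card : ℝ) else 0 with hu
  have husum : ∑ a : Fin n → X, u a = 1 := u_sum hT
  have hN : (0 : ℝ) < ((typeClass n t).card : ℝ) := by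
    exact_mod_cast Finset.card_pos.2 hT
  set Bd : ℝ := (1 / ((typeClass n t).card : ℝ)) *
    Real.exp ((n : ℝ) * typeEnt t - (n : ℝ) * (W.mutInfo t - δ)) with hBd
  have hBd0 : 0 ≤ Bd := by positivity
  have hu0 : ∀ a, 0 ≤ u a := by
    intro a; rw [hu]; dsimp only; split
    · positivity
    · exact le_refl 0
  -- bound on the jar mass
  have hG : ∀ yv : Fin n → Y,
      (∑ a : Fin n → X, u a * (if a ∈ W.dJar n t δ yv then 1 else 0)) ≤ Bd := by
    intro yv
    have heq : ∀ a : Fin n → X, u a * (if a ∈ W.dJar n t δ yv then 1 else 0)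
        = if a ∈ W.dJar n t δ yv then 1 / ((typeClass n t).card : ℝ) else 0 := by
      intro a
      by_cases hja : a ∈ W.dJar n t δ yv
      · have haT : a ∈ typeClass n t := (Finset.mem_filter.1 hja).1
        rw [hu]; simp [hja, haT]
      · simp [hja]
    rw [Finset.sum_congr rfl fun a _ => heq a, Finset.sum_ite_mem, Finset.univ_inter,
      Finset.sum_const, nsmul_eq_mul, hBd]
    have hjb := jar_card_bound W hn ht δ yv
    calc ((W.dJar n t δ yv).card : ℝ) * (1 / ((typeClass n t).card : ℝ))
        ≤ Real.exp ((n : ℝ) * typeEnt t - (n : ℝ) * (W.mutInfo t - δ)) *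
            (1 / ((typeClass n t).card : ℝ)) :=
          mul_le_mul_of_nonneg_right hjb (by positivity)
      _ = (1 / ((typeClass n t).card : ℝ)) *
            Real.exp ((n : ℝ) * typeEnt t - (n : ℝ) * (W.mutInfo t - δ)) := by ring
  -- channel mass
  have hchnn : ∀ (a : Fin n → X) (yv : Fin n → Y), 0 ≤ u a * ∏ i, W.p (a i) (yv i) :=
    fun a yv => mul_nonneg (hu0 a) (ch_nonneg W a yv)
  have hFsum : ∀ yv : Fin n → Y, 0 ≤ ∑ a : Fin n → X, u a * ∏ i, W.p (a i) (yv i) :=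
    fun yv => Finset.sum_nonneg fun a _ => hchnn a yv
  have hFtot : ∑ yv : Fin n → Y, ∑ a : Fin n → X, u a * ∏ i, W.p (a i) (yv i) = 1 := by
    rw [Finset.sum_comm]
    have : ∀ a : Fin n → X, ∑ yv : Fin n → Y, u a * ∏ i, W.p (a i) (yv i) = u a := by
      intro a; rw [← Finset.mul_sum, ch_sum W a, mul_one]
    rw [Finset.sum_congr rfl fun a _ => this a, husum]
  rw [Finset.sum_comm]
  have hq : ∀ q : Fin (2 ^ k),
      (∑ cb : Fin (2 ^ k) → Fin n → X, ∑ yv : Fin n → Y,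
        (∏ j, u (cb j)) * ((1 / (2 ^ k : ℝ)) * ((∏ i, W.p (cb q i) (yv i)) *
          (∑ j, if j ≠ q then (if cb j ∈ W.dJar n t δ yv then 1 else 0) else 0))))
      ≤ (2 ^ k : ℝ) * ((1 / (2 ^ k : ℝ)) * Bd) := by
    intro q
    -- push the j-sum outside
    have hexp : ∀ (cb : Fin (2 ^ k) → Fin n → X) (yv : Fin n → Y),
        (∏ j, u (cb j)) * ((1 / (2 ^ k : ℝ)) * ((∏ i, W.p (cb q i) (yv i)) *
          (∑ j, if j ≠ q then (if cb j ∈ W.dJar n t δ yv then 1 else 0) else 0)))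
        = ∑ j : Fin (2 ^ k), (1 / (2 ^ k : ℝ)) *
            ((∏ j', u (cb j')) * ((∏ i, W.p (cb q i) (yv i)) *
              (if j ≠ q then (if cb j ∈ W.dJar n t δ yv then 1 else 0) else 0))) := by
      intro cb yv
      rw [← Finset.mul_sum, ← Finset.mul_sum, ← Finset.mul_sum]
      ring
    calc (∑ cb : Fin (2 ^ k) → Fin n → X, ∑ yv : Fin n → Y,
        (∏ j, u (cb j)) * ((1 / (2 ^ k : ℝ)) * ((∏ i, W.p (cb q i) (yv i)) *
          (∑ j, if j ≠ q then (if cb j ∈ W.dJar n t δ yv then 1 else 0) else 0))))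
        = ∑ j : Fin (2 ^ k), (1 / (2 ^ k : ℝ)) * ∑ yv : Fin n → Y,
            ∑ cb : Fin (2 ^ k) → Fin n → X,
            ((∏ j', u (cb j')) * ((∏ i, W.p (cb q i) (yv i)) *
              (if j ≠ q then (if cb j ∈ W.dJar n t δ yv then 1 else 0) else 0))) := by
          rw [Finset.sum_congr rfl fun cb _ =>
            Finset.sum_congr rfl fun yv _ => hexp cb yv]
          have hcomm : ∀ cb : Fin (2 ^ k) → Fin n → X,
              (∑ yv : Fin n → Y, ∑ j : Fin (2 ^ k), (1 / (2 ^ k : ℝ)) *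
                ((∏ j', u (cb j')) * ((∏ i, W.p (cb q i) (yv i)) *
                  (if j ≠ q then (if cb j ∈ W.dJar n t δ yv then 1 else 0) else 0))))
              = ∑ j : Fin (2 ^ k), ∑ yv : Fin n → Y, (1 / (2 ^ k : ℝ)) *
                ((∏ j', u (cb j')) * ((∏ i, W.p (cb q i) (yv i)) *
                  (if j ≠ q then (if cb j ∈ W.dJar n t δ yv then 1 else 0) else 0))) :=
            fun cb => Finset.sum_comm
          rw [Finset.sum_congr rfl fun cb _ => hcomm cb]
          rw [Finset.sum_comm]
          refine Finset.sum_congr rfl fun j _ => ?_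
          have h1 : ∀ cb : Fin (2 ^ k) → Fin n → X,
              (∑ yv : Fin n → Y, (1 / (2 ^ k : ℝ)) *
                ((∏ j', u (cb j')) * ((∏ i, W.p (cb q i) (yv i)) *
                  (if j ≠ q then (if cb j ∈ W.dJar n t δ yv then 1 else 0) else 0))))
              = (1 / (2 ^ k : ℝ)) * ∑ yv : Fin n → Y,
                ((∏ j', u (cb j')) * ((∏ i, W.p (cb q i) (yv i)) *
                  (if j ≠ q then (if cb j ∈ W.dJar n t δ yv then 1 else 0) else 0))) :=
            fun cb => (Finset.mul_sum _ _ _).symm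
          rw [Finset.sum_congr rfl fun cb _ => h1 cb, ← Finset.mul_sum]
          congr 1
          have h2 : (∑ cb : Fin (2 ^ k) → Fin n → X, ∑ yv : Fin n → Y,
                ((∏ j', u (cb j')) * ((∏ i, W.p (cb q i) (yv i)) *
                  (if j ≠ q then (if cb j ∈ W.dJar n t δ yv then 1 else 0) else 0))))
              = ∑ yv : Fin n → Y, ∑ cb : Fin (2 ^ k) → Fin n → X,
                ((∏ j', u (cb j')) * ((∏ i, W.p (cb q i) (yv i)) *
                  (if j ≠ q then (if cb j ∈ W.dJar n t δ yv then 1 else 0) else 0))) :=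
            Finset.sum_comm
          exact h2
      _ ≤ ∑ j : Fin (2 ^ k), (1 / (2 ^ k : ℝ)) * Bd := by
          refine Finset.sum_le_sum fun j _ => ?_
          refine mul_le_mul_of_nonneg_left ?_ (by positivity)
          by_cases hjq : j ≠ q
          · -- main case
            have hcb : ∀ yv : Fin n → Y,
                (∑ cb : Fin (2 ^ k) → Fin n → X,
                  ((∏ j', u (cb j')) * ((∏ i, W.p (cb q i) (yv i)) *
                    (if j ≠ q then (if cb j ∈ W.dJar n t δ yv then 1 else 0) else 0))))
                = (∑ a, u a * ∏ i, W.p (a i) (yv i)) *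
                  (∑ a, u a * (if a ∈ W.dJar n t δ yv then 1 else 0)) := by
              intro yv
              rw [← sum_cb_two husum (fun a => ∏ i, W.p (a i) (yv i))
                (fun a => if a ∈ W.dJar n t δ yv then 1 else 0) hjq]
              refine Finset.sum_congr rfl fun cb _ => ?_
              rw [if_pos hjq]
            rw [Finset.sum_congr rfl fun yv _ => hcb yv]
            calc (∑ yv : Fin n → Y, (∑ a, u a * ∏ i, W.p (a i) (yv i)) *
                  (∑ a, u a * (if a ∈ W.dJar n t δ yv then 1 else 0)))
                ≤ ∑ yv : Fin n → Y, (∑ a, u a * ∏ i, W.p (a i) (yv i)) * Bd :=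
                  Finset.sum_le_sum fun yv _ =>
                    mul_le_mul_of_nonneg_left (hG yv) (hFsum yv)
              _ = Bd := by rw [← Finset.sum_mul, hFtot, one_mul]
          · -- j = q : everything is zero
            have : ∀ (yv : Fin n → Y) (cb : Fin (2 ^ k) → Fin n → X),
                ((∏ j', u (cb j')) * ((∏ i, W.p (cb q i) (yv i)) *
                  (if j ≠ q then (if cb j ∈ W.dJar n t δ yv then 1 else 0) else 0))) = 0 := by
              intro yv cb; rw [if_neg hjq]; ring
            rw [Finset.sum_congr rfl fun yv _ =>
              Finset.sum_congr rfl fun cb _ => this yv cb]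
            simp [hBd0]
      _ = (2 ^ k : ℝ) * ((1 / (2 ^ k : ℝ)) * Bd) := by
          rw [Finset.sum_const, Finset.card_univ, Fintype.card_fin, nsmul_eq_mul]
          push_cast; ring
  calc (∑ q : Fin (2 ^ k), ∑ cb : Fin (2 ^ k) → Fin n → X, ∑ yv : Fin n → Y,
      (∏ j, u (cb j)) * ((1 / (2 ^ k : ℝ)) * ((∏ i, W.p (cb q i) (yv i)) *
        (∑ j, if j ≠ q then (if cb j ∈ W.dJar n t δ yv then 1 else 0) else 0))))
      ≤ ∑ q : Fin (2 ^ k), (2 ^ k : ℝ) * ((1 / (2 ^ k : ℝ)) * Bd) :=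
        Finset.sum_le_sum fun q _ => hq q
    _ = (2 ^ k : ℝ) * Bd := by
        rw [Finset.sum_const, Finset.card_univ, Fintype.card_fin, nsmul_eq_mul]
        have hM : ((2 : ℝ) ^ k) ≠ 0 := by positivity
        push_cast; field_simp

lemma ind_bound (W : DIMC X Y) {n m : ℕ} (t : X → ℝ) (δ : ℝ)
    (cb : Fin m → Fin n → X) (q : Fin m) (yv : Fin n → Y) :
    (if cb q ∉ W.dJar n t δ yv ∨ ∃ j, cb j ≠ cb q ∧ cb j ∈ W.dJar n t δ yv
      then (1 : ℝ) else 0)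
    ≤ (if cb q ∉ W.dJar n t δ yv then (1 : ℝ) else 0)
      + ∑ j, (if j ≠ q then (if cb j ∈ W.dJar n t δ yv then (1 : ℝ) else 0) else 0) := by
  have hterm : ∀ j : Fin m, (0 : ℝ) ≤
      (if j ≠ q then (if cb j ∈ W.dJar n t δ yv then (1 : ℝ) else 0) else 0) := by
    intro j; split
    · split <;> norm_num
    · exact le_refl 0
  have h2nn : (0 : ℝ) ≤
      ∑ j, (if j ≠ q then (if cb j ∈ W.dJar n t δ yv then (1 : ℝ) else 0) else 0) :=
    Finset.sum_nonneg fun j _ => hterm j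
  have h1nn : (0 : ℝ) ≤ (if cb q ∉ W.dJar n t δ yv then (1 : ℝ) else 0) := by
    split <;> norm_num
  by_cases hor : cb q ∉ W.dJar n t δ yv ∨ ∃ j, cb j ≠ cb q ∧ cb j ∈ W.dJar n t δ yv
  · rw [if_pos hor]
    rcases hor with hA | ⟨j0, hne, hmem⟩
    · rw [if_pos hA]; linarith
    · have hj0q : j0 ≠ q := fun h => hne (by rw [h])
      have hone : (1 : ℝ) ≤
          ∑ j, (if j ≠ q then (if cb j ∈ W.dJar n t δ yv then (1 : ℝ) else 0) else 0) := by
        have := Finset.single_le_sum (f := fun j =>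
          (if j ≠ q then (if cb j ∈ W.dJar n t δ yv then (1 : ℝ) else 0) else 0))
          (fun j _ => hterm j) (Finset.mem_univ j0)
        simpa [hj0q, hmem] using this
      linarith
  · rw [if_neg hor]; linarith

end Aux

/-- Theorem 3: for every block length `n`, every type `t` with `T^n_t`
nonempty, every positive integer `k` and every `δ > 0`,
`P_err(t,n,k,δ) ≤ P_{t,δ} + e^{-n (I(t;P) - δ - R) + n H(t) - ln |T^n_t|}`
where `R = (k/n) ln 2`. -/
theorem fixed_type_error_bound {X Y : Type} [Fintype X] [Fintype Y] (W : DIMC X Y)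
    (n : ℕ) (hn : 0 < n) (t : X → ℝ) (ht : IsType n t)
    (hT : (typeClass n t).Nonempty) (k : ℕ) (hk : 1 ≤ k) (δ : ℝ) (hδ : 0 < δ)
    (xv : Fin n → X) (hxv : xv ∈ typeClass n t) :
    W.PerrT n k t δ ≤
      W.Ptd n t δ xv +
        Real.exp (-(n : ℝ) * (W.mutInfo t - δ - (k : ℝ) / n * Real.log 2) +
          (n : ℝ) * typeEnt t - Real.log ((typeClass n t).card : ℝ)) := by
  have hN : (0 : ℝ) < ((typeClass n t).card : ℝ) := by
    exact_mod_cast Finset.card_pos.2 hT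
  have hn' : (0 : ℝ) < n := by exact_mod_cast hn
  -- the exponential on the RHS
  have hexp_eq : Real.exp (-(n : ℝ) * (W.mutInfo t - δ - (k : ℝ) / n * Real.log 2) +
        (n : ℝ) * typeEnt t - Real.log ((typeClass n t).card : ℝ))
      = (2 ^ k : ℝ) * ((1 / ((typeClass n t).card : ℝ)) *
          Real.exp ((n : ℝ) * typeEnt t - (n : ℝ) * (W.mutInfo t - δ))) := by
    have h1 : -(n : ℝ) * (W.mutInfo t - δ - (k : ℝ) / n * Real.log 2) +
          (n : ℝ) * typeEnt t - Real.log ((typeClass n t).card : ℝ)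
        = (k : ℝ) * Real.log 2 +
            (((n : ℝ) * typeEnt t - (n : ℝ) * (W.mutInfo t - δ)) +
              (-Real.log ((typeClass n t).card : ℝ))) := by
      field_simp
      ring
    rw [h1, Real.exp_add, Real.exp_add, Real.exp_neg, Real.exp_log hN]
    have h2 : Real.exp ((k : ℝ) * Real.log 2) = (2 : ℝ) ^ k := by
      rw [Real.exp_nat_mul, Real.exp_log (by norm_num : (0:ℝ) < 2)]
    rw [h2, one_div]
    ring
  rw [DIMC.PerrT, hexp_eq]
  calc (∑ cb : Fin (2 ^ k) → Fin n → X, ∑ q : Fin (2 ^ k), ∑ yv : Fin n → Y,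
      (∏ j, if cb j ∈ typeClass n t then 1 / ((typeClass n t).card : ℝ) else 0) *
        ((1 / (2 ^ k : ℝ)) *
          ((∏ i, W.p (cb q i) (yv i)) *
            (if cb q ∉ W.dJar n t δ yv ∨ ∃ j, cb j ≠ cb q ∧ cb j ∈ W.dJar n t δ yv
              then 1 else 0))))
      ≤ ∑ cb : Fin (2 ^ k) → Fin n → X, ∑ q : Fin (2 ^ k), ∑ yv : Fin n → Y,
        ((∏ j, if cb j ∈ typeClass n t then 1 / ((typeClass n t).card : ℝ) else 0) *
          ((1 / (2 ^ k : ℝ)) * ((∏ i, W.p (cb q i) (yv i)) *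
            (if cb q ∉ W.dJar n t δ yv then 1 else 0)))
        + (∏ j, if cb j ∈ typeClass n t then 1 / ((typeClass n t).card : ℝ) else 0) *
          ((1 / (2 ^ k : ℝ)) * ((∏ i, W.p (cb q i) (yv i)) *
            (∑ j, if j ≠ q then (if cb j ∈ W.dJar n t δ yv then 1 else 0) else 0)))) := by
        refine Finset.sum_le_sum fun cb _ => Finset.sum_le_sum fun q _ =>
          Finset.sum_le_sum fun yv _ => ?_
        have ha : (0 : ℝ) ≤
            ∏ j, if cb j ∈ typeClass n t then 1 / ((typeClass n t).card : ℝ) else 0 := by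
          refine Finset.prod_nonneg fun j _ => ?_
          split
          · positivity
          · exact le_refl 0
        have hch : (0 : ℝ) ≤ ∏ i, W.p (cb q i) (yv i) := ch_nonneg W _ _
        have hind := ind_bound W t δ cb q yv
        set a := ∏ j, if cb j ∈ typeClass n t then 1 / ((typeClass n t).card : ℝ) else 0
        set c := ∏ i, W.p (cb q i) (yv i)
        set i0 := (if cb q ∉ W.dJar n t δ yv ∨ ∃ j, cb j ≠ cb q ∧ cb j ∈ W.dJar n t δ yv
          then (1:ℝ) else 0)
        set i1 := (if cb q ∉ W.dJar n t δ yv then (1:ℝ) else 0)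
        set i2 := ∑ j, (if j ≠ q then (if cb j ∈ W.dJar n t δ yv then (1:ℝ) else 0) else 0)
        have hM0 : (0 : ℝ) ≤ 1 / (2 ^ k : ℝ) := by positivity
        calc a * ((1 / (2 ^ k : ℝ)) * (c * i0))
            = (a * (1 / (2 ^ k : ℝ)) * c) * i0 := by ring
          _ ≤ (a * (1 / (2 ^ k : ℝ)) * c) * (i1 + i2) := by
              refine mul_le_mul_of_nonneg_left hind ?_
              positivity
          _ = a * ((1 / (2 ^ k : ℝ)) * (c * i1))
              + a * ((1 / (2 ^ k : ℝ)) * (c * i2)) := by ring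
    _ = (∑ cb : Fin (2 ^ k) → Fin n → X, ∑ q : Fin (2 ^ k), ∑ yv : Fin n → Y,
          (∏ j, if cb j ∈ typeClass n t then 1 / ((typeClass n t).card : ℝ) else 0) *
            ((1 / (2 ^ k : ℝ)) * ((∏ i, W.p (cb q i) (yv i)) *
              (if cb q ∉ W.dJar n t δ yv then 1 else 0))))
        + (∑ cb : Fin (2 ^ k) → Fin n → X, ∑ q : Fin (2 ^ k), ∑ yv : Fin n → Y,
          (∏ j, if cb j ∈ typeClass n t then 1 / ((typeClass n t).card : ℝ) else 0) *
            ((1 / (2 ^ k : ℝ)) * ((∏ i, W.p (cb q i) (yv i)) *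
              (∑ j, if j ≠ q then (if cb j ∈ W.dJar n t δ yv then 1 else 0) else 0)))) := by
        rw [← Finset.sum_add_distrib]
        refine Finset.sum_congr rfl fun cb _ => ?_
        rw [← Finset.sum_add_distrib]
        refine Finset.sum_congr rfl fun q _ => ?_
        rw [← Finset.sum_add_distrib]
    _ ≤ W.Ptd n t δ xv + (2 ^ k : ℝ) * ((1 / ((typeClass n t).card : ℝ)) *
          Real.exp ((n : ℝ) * typeEnt t - (n : ℝ) * (W.mutInfo t - δ))) := by
        refine add_le_add ?_ ?_
        · rw [part1_eq W hT k δ hxv]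
        · exact part2_bound W hn ht hT k δ
end
end

section
/- For every positive integer n, every type t on X, every real delta, and every y^n in Y^n, the DIMC jar satisfies |J_t(y^n)| <= e^{n ( H(t) - I(t;P) + delta )}. -/
open scoped Classical BigOperators
open Finset

noncomputable section

/-- for every positive `n`, every type `t`, every real `δ` and every
output sequence `y^n`, the DIMC jar satisfies `|J_t(y^n)| ≤ e^{n (H(t) - I(t;P) + δ)}`. -/
theorem djar_card_le {X Y : Type} [Fintype X] [Fintype Y] (W : DIMC X Y)
    (n : ℕ) (hn : 0 < n) (t : X → ℝ) (ht : IsType n t) (δ : ℝ) (yv : Fin n → Y) :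
    ((W.dJar n t δ yv).card : ℝ) ≤
      Real.exp ((n : ℝ) * (typeEnt t - W.mutInfo t + δ)) := by
  by_cases hne : W.dJar n t δ yv = ∅
  · rw [hne]; simp; positivity
  obtain ⟨x0, hx0⟩ := Finset.nonempty_iff_ne_empty.2 hne
  -- basic facts about x0
  have hx0' : x0 ∈ typeClass n t ∧ 0 < (∏ i, W.p (x0 i) (yv i)) ∧
      -(1 / (n : ℝ)) * ∑ i, Real.log (W.p (x0 i) (yv i) / W.qOut t (yv i)) <
        -W.mutInfo t + δ := by
    simpa [DIMC.dJar, Finset.mem_filter] using hx0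
  -- q positive
  have hqpos : ∀ i, 0 < W.qOut t (yv i) := by
    intro i
    have hp0 : 0 < W.p (x0 i) (yv i) := by
      by_contra h
      have h0 : W.p (x0 i) (yv i) = 0 := le_antisymm (not_lt.1 h) (W.p_nonneg _ _)
      have := Finset.prod_eq_zero (f := fun i => W.p (x0 i) (yv i))
        (Finset.mem_univ i) h0
      linarith [hx0'.2.1]
    have htpos : 0 < t (x0 i) := by
      have htc := (Finset.mem_filter.1 hx0'.1).2 (x0 i)
      have h1 : (1 : ℝ) ≤ ((Finset.univ.filter fun j => x0 j = x0 i).card : ℝ) := by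
        have : i ∈ Finset.univ.filter fun j => x0 j = x0 i := by simp
        exact_mod_cast Finset.card_pos.2 ⟨i, this⟩
      nlinarith [ht.1 (x0 i), (Nat.cast_pos (α := ℝ)).2 hn]
    have : t (x0 i) * W.p (x0 i) (yv i) ≤ W.qOut t (yv i) := by
      unfold DIMC.qOut
      exact Finset.single_le_sum (f := fun x => t x * W.p x (yv i))
        (fun x _ => mul_nonneg (ht.1 x) (W.p_nonneg _ _)) (Finset.mem_univ (x0 i))
    nlinarith
  -- the weight function
  set f : (Fin n → X) → ℝ :=
    fun xv => ∏ i, t (xv i) * W.p (xv i) (yv i) / W.qOut t (yv i) with hf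
  have hfnonneg : ∀ xv, 0 ≤ f xv := fun xv =>
    Finset.prod_nonneg fun i _ => div_nonneg (mul_nonneg (ht.1 _) (W.p_nonneg _ _))
      (hqpos i).le
  -- total sum equals 1
  have hsum1 : ∑ xv : Fin n → X, f xv = 1 := by
    rw [hf]
    rw [← Fintype.prod_sum (fun i (x : X) => t x * W.p x (yv i) / W.qOut t (yv i))]
    rw [Finset.prod_eq_one]
    intro i _
    rw [← Finset.sum_div]
    exact div_self (ne_of_gt (hqpos i))
  -- lower bound on f for members of the jar
  have hlow : ∀ xv ∈ W.dJar n t δ yv,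
      Real.exp (-((n : ℝ) * (typeEnt t - W.mutInfo t + δ))) ≤ f xv := by
    intro xv hxv
    have hxv' : xv ∈ typeClass n t ∧ 0 < (∏ i, W.p (xv i) (yv i)) ∧
        -(1 / (n : ℝ)) * ∑ i, Real.log (W.p (xv i) (yv i) / W.qOut t (yv i)) <
          -W.mutInfo t + δ := by
      simpa [DIMC.dJar, Finset.mem_filter] using hxv
    have hppos : ∀ i, 0 < W.p (xv i) (yv i) := by
      intro i
      by_contra h
      have h0 : W.p (xv i) (yv i) = 0 := le_antisymm (not_lt.1 h) (W.p_nonneg _ _)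
      have := Finset.prod_eq_zero (f := fun i => W.p (xv i) (yv i))
        (Finset.mem_univ i) h0
      linarith [hxv'.2.1]
    have htc := (Finset.mem_filter.1 hxv'.1).2
    have htpos : ∀ i, 0 < t (xv i) := by
      intro i
      have h1 : (1 : ℝ) ≤ ((Finset.univ.filter fun j => xv j = xv i).card : ℝ) := by
        have : i ∈ Finset.univ.filter fun j => xv j = xv i := by simp
        exact_mod_cast Finset.card_pos.2 ⟨i, this⟩
      have := htc (xv i)
      nlinarith [ht.1 (xv i), (Nat.cast_pos (α := ℝ)).2 hn]
    have hfac : ∀ i, 0 < t (xv i) * W.p (xv i) (yv i) / W.qOut t (yv i) :=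
      fun i => div_pos (mul_pos (htpos i) (hppos i)) (hqpos i)
    -- log of product
    have hlogf : Real.log (f xv) =
        (∑ i, Real.log (t (xv i))) +
          ∑ i, Real.log (W.p (xv i) (yv i) / W.qOut t (yv i)) := by
      rw [hf, Real.log_prod (fun i _ => (hfac i).ne')]
      rw [← Finset.sum_add_distrib]
      refine Finset.sum_congr rfl fun i _ => ?_
      rw [mul_div_assoc, Real.log_mul (htpos i).ne'
        (div_pos (hppos i) (hqpos i)).ne']
    -- entropy part
    have hent : (∑ i, Real.log (t (xv i))) = -(n : ℝ) * typeEnt t := by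
      rw [← Finset.sum_fiberwise' Finset.univ (fun i => xv i)
        (fun x => Real.log (t x))]
      have : ∀ x : X, (∑ _i ∈ Finset.univ.filter fun j => xv j = x,
          Real.log (t x)) = (n : ℝ) * t x * Real.log (t x) := by
        intro x
        rw [Finset.sum_const, nsmul_eq_mul, htc x]
      rw [Finset.sum_congr rfl fun x _ => this x]
      rw [typeEnt, neg_mul_neg, Finset.mul_sum]
      exact Finset.sum_congr rfl fun x _ => by ring
    -- information part
    have hinfo : (n : ℝ) * (W.mutInfo t - δ) ≤
        ∑ i, Real.log (W.p (xv i) (yv i) / W.qOut t (yv i)) := by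
      have hn' : (0 : ℝ) < n := Nat.cast_pos.2 hn
      have h4 := mul_lt_mul_of_pos_left hxv'.2.2 hn'
      have h3 : (n : ℝ) * (-(1 / (n : ℝ)) *
          ∑ i, Real.log (W.p (xv i) (yv i) / W.qOut t (yv i))) =
          -(∑ i, Real.log (W.p (xv i) (yv i) / W.qOut t (yv i))) := by
        field_simp
      rw [h3] at h4
      nlinarith [h4]
    have hfpos : 0 < f xv := Finset.prod_pos fun i _ => hfac i
    rw [← Real.exp_log hfpos]
    apply Real.exp_le_exp.2
    rw [hlogf, hent]
    nlinarith [hinfo]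
  -- put it together
  have hkey : ((W.dJar n t δ yv).card : ℝ) *
      Real.exp (-((n : ℝ) * (typeEnt t - W.mutInfo t + δ))) ≤ 1 := by
    calc ((W.dJar n t δ yv).card : ℝ) *
        Real.exp (-((n : ℝ) * (typeEnt t - W.mutInfo t + δ)))
        = ∑ _xv ∈ W.dJar n t δ yv,
            Real.exp (-((n : ℝ) * (typeEnt t - W.mutInfo t + δ))) := by
          rw [Finset.sum_const, nsmul_eq_mul]
      _ ≤ ∑ xv ∈ W.dJar n t δ yv, f xv := Finset.sum_le_sum hlow
      _ ≤ ∑ xv : Fin n → X, f xv :=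
          Finset.sum_le_sum_of_subset_of_nonneg (Finset.subset_univ _)
            (fun xv _ _ => hfnonneg xv)
      _ = 1 := hsum1
  calc ((W.dJar n t δ yv).card : ℝ)
      = ((W.dJar n t δ yv).card : ℝ) *
          Real.exp (-((n : ℝ) * (typeEnt t - W.mutInfo t + δ))) *
          Real.exp ((n : ℝ) * (typeEnt t - W.mutInfo t + δ)) := by
        rw [mul_assoc, ← Real.exp_add, neg_add_cancel, Real.exp_zero, mul_one]
    _ ≤ 1 * Real.exp ((n : ℝ) * (typeEnt t - W.mutInfo t + δ)) :=
        mul_le_mul_of_nonneg_right hkey (Real.exp_pos _).le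
    _ = _ := one_mul _
end
end

section
/- (NEP with respect to conditional entropy, Chernoff part) For every positive integer n and every delta >= 0: Pr{ -(1/n) sum_{i=1}^n ln p(X_i|Y_i) > H(X|Y) + delta } <= e^{-n r(delta)}. -/
open scoped Classical BigOperators
open Finset

noncomputable section

/-- A joint pmf on finite alphabets `X` and `Y`, with all probabilities positive. -/
structure JointPMF (X Y : Type) [Fintype X] [Fintype Y] where
  p : X → Y → ℝ
  p_pos : ∀ x y, 0 < p x y
  p_sum : ∑ x, ∑ y, p x y = 1

namespace JointPMF

variable {X Y : Type} [Fintype X] [Fintype Y] (P : JointPMF X Y)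

/-- Marginal `p(y)`. -/
def pY (y : Y) : ℝ := ∑ x, P.p x y

/-- Conditional pmf `p(x|y)`. -/
def pXY (x : X) (y : Y) : ℝ := P.p x y / P.pY y

/-- Conditional entropy `H(X|Y)` (in nats). -/
def condEnt : ℝ := ∑ x, ∑ y, P.p x y * (-Real.log (P.pXY x y))

/-- `Pr{ -(1/n) sum_i ln p(X_i|Y_i) > H(X|Y) + δ }` for `n` i.i.d. copies of `(X,Y)`. -/
def tailProb (n : ℕ) (δ : ℝ) : ℝ :=
  ∑ xv : Fin n → X, ∑ yv : Fin n → Y,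
    (∏ i, P.p (xv i) (yv i)) *
      (if P.condEnt + δ < -(1 / (n : ℝ)) * ∑ i, Real.log (P.pXY (xv i) (yv i))
        then 1 else 0)

/-- `ln sum_{x,y} p(y) p(x|y)^{1-λ}`. -/
def tiltLogSum (lam : ℝ) : ℝ :=
  Real.log (∑ x, ∑ y, P.pY y * P.pXY x y ^ (1 - lam))

/-- The rate function `r(δ)`. -/
def rFun (δ : ℝ) : ℝ :=
  sSup ((fun lam => lam * (P.condEnt + δ) - P.tiltLogSum lam) '' Set.Ici 0)

/-- The tilting factor `f_λ(x,y)`. -/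
def fLam (lam : ℝ) (x : X) (y : Y) : ℝ :=
  P.pXY x y ^ (-lam) / ∑ u, ∑ v, P.pY v * P.pXY u v ^ (1 - lam)

/-- `δ(λ)`. -/
def deltaLam (lam : ℝ) : ℝ :=
  (∑ x, ∑ y, P.p x y * (P.fLam lam x y * (-Real.log (P.pXY x y)))) - P.condEnt

/-- `σ²(λ)`. -/
def sigmaSq (lam : ℝ) : ℝ :=
  ∑ x, ∑ y,
    P.fLam lam x y * (P.pY y * (P.pXY x y *
      |(-Real.log (P.pXY x y)) - (P.condEnt + P.deltaLam lam)| ^ 2))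

/-- `M(λ)`. -/
def Mthird (lam : ℝ) : ℝ :=
  ∑ x, ∑ y,
    P.fLam lam x y * (P.pY y * (P.pXY x y *
      |(-Real.log (P.pXY x y)) - (P.condEnt + P.deltaLam lam)| ^ 3))

/-- `σ² = sum_{x,y} p(x,y) (-ln p(x|y) - H(X|Y))²`. -/
def sigma0 : ℝ :=
  ∑ x, ∑ y, P.p x y * ((-Real.log (P.pXY x y)) - P.condEnt) ^ 2

/-- `M = sum_{x,y} p(x,y) |-ln p(x|y) - H(X|Y)|³`. -/
def M0 : ℝ :=
  ∑ x, ∑ y, P.p x y * |(-Real.log (P.pXY x y)) - P.condEnt| ^ 3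

/-- `ξ̄(λ,n)` with the Berry-Esseen constant `C = 0.4784`. -/
def xiBar (lam : ℝ) (n : ℕ) : ℝ :=
  2 * 0.4784 * P.Mthird lam / (Real.sqrt n * Real.sqrt (P.sigmaSq lam) ^ 3) +
    Real.exp ((n : ℝ) * lam ^ 2 * P.sigmaSq lam / 2) *
      (gaussQ (Real.sqrt n * lam * Real.sqrt (P.sigmaSq lam)) -
        gaussQ
          (gaussQinv
              (0.4784 * P.Mthird lam /
                (Real.sqrt n * Real.sqrt (P.sigmaSq lam) ^ 3)) +
            Real.sqrt n * lam * Real.sqrt (P.sigmaSq lam)))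

/-- `ξ̲(λ,n)` with the Berry-Esseen constant `C = 0.4784`. -/
def xiUnder (lam : ℝ) (n : ℕ) : ℝ :=
  Real.exp ((n : ℝ) * lam ^ 2 * P.sigmaSq lam / 2) *
    gaussQ
      (gaussQinv
          (1 / 2 - 2 * 0.4784 * P.Mthird lam /
            (Real.sqrt n * Real.sqrt (P.sigmaSq lam) ^ 3)) +
        Real.sqrt n * lam * Real.sqrt (P.sigmaSq lam))

end JointPMF

namespace JointPMF

variable {X Y : Type} [Fintype X] [Fintype Y] (P : JointPMF X Y)

lemma univX_nonempty (Q : JointPMF X Y) : (Finset.univ : Finset X).Nonempty := by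
  by_contra h
  rw [Finset.not_nonempty_iff_eq_empty] at h
  have := Q.p_sum
  simp [h] at this

lemma univY_nonempty (Q : JointPMF X Y) : (Finset.univ : Finset Y).Nonempty := by
  by_contra h
  rw [Finset.not_nonempty_iff_eq_empty] at h
  have := Q.p_sum
  simp [h] at this

lemma pY_pos (y : Y) : 0 < P.pY y :=
  Finset.sum_pos (fun x _ => P.p_pos x y) (P.univX_nonempty)

lemma pXY_pos (x : X) (y : Y) : 0 < P.pXY x y :=
  div_pos (P.p_pos x y) (P.pY_pos y)

lemma p_eq (x : X) (y : Y) : P.p x y = P.pY y * P.pXY x y := by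
  rw [pXY, mul_div_assoc', mul_div_cancel_left₀ _ (P.pY_pos y).ne']

lemma chernoff_aux (n : ℕ) (hn : 0 < n) (δ : ℝ) (lam : ℝ) (hlam : 0 ≤ lam) :
    P.tailProb n δ ≤ Real.exp (-(n : ℝ) * (lam * (P.condEnt + δ) - P.tiltLogSum lam)) := by
  have hn' : (0 : ℝ) < n := Nat.cast_pos.mpr hn
  set c := P.condEnt + δ with hc
  set g : X → Y → ℝ := fun x y => P.p x y * P.pXY x y ^ (-lam) with hg
  set T : ℝ := ∑ x, ∑ y, P.pY y * P.pXY x y ^ ((1 : ℝ) - lam) with hT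
  have hTpos : 0 < T := by
    refine Finset.sum_pos (fun x _ => Finset.sum_pos (fun y _ => ?_) P.univY_nonempty)
      P.univX_nonempty
    exact mul_pos (P.pY_pos y) (Real.rpow_pos_of_pos (P.pXY_pos x y) _)
  have hgT : (∑ x, ∑ y, g x y) = T := by
    refine Finset.sum_congr rfl fun x _ => Finset.sum_congr rfl fun y _ => ?_
    have hp := P.pXY_pos x y
    simp only [hg]
    rw [P.p_eq x y, mul_assoc]
    congr 1
    rw [show (1 : ℝ) - lam = 1 + (-lam) by ring, Real.rpow_add hp, Real.rpow_one]
  -- termwise bound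
  have hterm : ∀ (xv : Fin n → X) (yv : Fin n → Y),
      (∏ i, P.p (xv i) (yv i)) *
        (if P.condEnt + δ < -(1 / (n : ℝ)) * ∑ i, Real.log (P.pXY (xv i) (yv i))
          then (1 : ℝ) else 0)
      ≤ Real.exp (-(lam * n * c)) * ∏ i, g (xv i) (yv i) := by
    intro xv yv
    set S := ∑ i, Real.log (P.pXY (xv i) (yv i)) with hS
    have hprod : ∏ i, g (xv i) (yv i)
        = (∏ i, P.p (xv i) (yv i)) * Real.exp (-(lam * S)) := by
      simp only [hg]
      rw [Finset.prod_mul_distrib]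
      congr 1
      have : ∀ i : Fin n, P.pXY (xv i) (yv i) ^ (-lam)
          = Real.exp (Real.log (P.pXY (xv i) (yv i)) * (-lam)) := fun i =>
        Real.rpow_def_of_pos (P.pXY_pos _ _) _
      rw [Finset.prod_congr rfl fun i _ => this i, ← Real.exp_sum, ← Finset.sum_mul]
      ring_nf
      rw [hS, mul_comm]
    rw [hprod, ← mul_assoc, mul_comm (Real.exp (-(lam * n * c))), mul_assoc,
      ← Real.exp_add]
    refine mul_le_mul_of_nonneg_left ?_ (Finset.prod_nonneg fun i _ => (P.p_pos _ _).le)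
    split_ifs with h
    · refine Real.one_le_exp ?_
      have h2 : (n : ℝ) * (P.condEnt + δ) < -S := by
        have h3 := (mul_lt_mul_iff_right₀ hn').mpr h
        rwa [show (n : ℝ) * (-(1 / (n : ℝ)) * S) = -S by field_simp] at h3
      have h4 : 0 ≤ lam * (-S - n * c) :=
        mul_nonneg hlam (by rw [hc]; linarith)
      nlinarith [h4]
    · positivity
  calc P.tailProb n δ
      ≤ ∑ xv : Fin n → X, ∑ yv : Fin n → Y,
          Real.exp (-(lam * n * c)) * ∏ i, g (xv i) (yv i) := by
        refine Finset.sum_le_sum fun xv _ => Finset.sum_le_sum fun yv _ => hterm xv yv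
    _ = Real.exp (-(lam * n * c)) *
          ∑ xv : Fin n → X, ∑ yv : Fin n → Y, ∏ i, g (xv i) (yv i) := by
        rw [Finset.mul_sum]
        exact Finset.sum_congr rfl fun xv _ => (Finset.mul_sum _ _ _).symm
    _ = Real.exp (-(lam * n * c)) * T ^ n := by
        congr 1
        have h1 : ∀ xv : Fin n → X,
            (∑ yv : Fin n → Y, ∏ i, g (xv i) (yv i)) = ∏ i, ∑ y, g (xv i) y := by
          intro xv
          simpa using
            (Finset.prod_univ_sum (fun _ : Fin n => (Finset.univ : Finset Y))
              (fun i y => g (xv i) y)).symm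
        rw [Finset.sum_congr rfl fun xv _ => h1 xv]
        have h2 : (∑ xv : Fin n → X, ∏ i, ∑ y, g (xv i) y)
            = ∏ _i : Fin n, ∑ x, ∑ y, g x y := by
          simpa using
            (Finset.prod_univ_sum (fun _ : Fin n => (Finset.univ : Finset X))
              (fun i x => ∑ y, g x y)).symm
        rw [h2, hgT, Finset.prod_const, Finset.card_univ, Fintype.card_fin]
    _ = Real.exp (-(n : ℝ) * (lam * c - P.tiltLogSum lam)) := by
        have : P.tiltLogSum lam = Real.log T := rfl
        rw [this, show -(n : ℝ) * (lam * c - Real.log T)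
            = -(lam * n * c) + (n : ℝ) * Real.log T by ring, Real.exp_add]
        congr 1
        rw [mul_comm (n : ℝ), Real.exp_mul, Real.exp_log hTpos, Real.rpow_natCast]

lemma tiltLogSum_zero : P.tiltLogSum 0 = 0 := by
  have h : (∑ x, ∑ y, P.pY y * P.pXY x y ^ ((1 : ℝ) - 0)) = 1 := by
    simp only [sub_zero, Real.rpow_one]
    rw [← P.p_sum]
    exact Finset.sum_congr rfl fun x _ => Finset.sum_congr rfl fun y _ => (P.p_eq x y).symm
  rw [tiltLogSum, h, Real.log_one]

end JointPMF

/-- NEP w.r.t. conditional entropy, Chernoff part: for every positive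
`n` and every `δ ≥ 0`,
`Pr{ -(1/n) sum_i ln p(X_i|Y_i) > H(X|Y) + δ } ≤ e^{-n r(δ)}`. -/
theorem nep_condEnt_chernoff {X Y : Type} [Fintype X] [Fintype Y] (P : JointPMF X Y)
    (n : ℕ) (hn : 0 < n) (δ : ℝ) (hδ : 0 ≤ δ) :
    P.tailProb n δ ≤ Real.exp (-(n : ℝ) * P.rFun δ) := by
  have hn' : (0 : ℝ) < n := Nat.cast_pos.mpr hn
  rcases le_or_gt (P.tailProb n δ) 0 with h | ht
  · exact h.trans (Real.exp_pos _).le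
  · set t := P.tailProb n δ with htdef
    have hle1 : t ≤ 1 := by
      have := P.chernoff_aux n hn δ 0 le_rfl
      simpa [P.tiltLogSum_zero] using this
    have h0 : 0 ≤ -Real.log t / n := by
      have h1 : Real.log t ≤ 0 := Real.log_nonpos ht.le hle1
      exact div_nonneg (neg_nonneg.mpr h1) hn'.le
    have hb : ∀ a ∈ (fun lam => lam * (P.condEnt + δ) - P.tiltLogSum lam) '' Set.Ici 0,
        a ≤ -Real.log t / n := by
      rintro a ⟨lam, hlam, rfl⟩
      have hkey := P.chernoff_aux n hn δ lam hlam
      have hlog : Real.log t ≤ -(n : ℝ) * (lam * (P.condEnt + δ) - P.tiltLogSum lam) := by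
        calc Real.log t ≤ Real.log (Real.exp (-(n : ℝ) * (lam * (P.condEnt + δ) - P.tiltLogSum lam))) :=
              Real.log_le_log ht hkey
          _ = _ := Real.log_exp _
      rw [le_div_iff₀ hn']
      show (lam * (P.condEnt + δ) - P.tiltLogSum lam) * (n : ℝ) ≤ -Real.log t
      nlinarith [hlog]
    have hsup : P.rFun δ ≤ -Real.log t / n := Real.sSup_le hb h0
    have hfin : Real.log t ≤ -(n : ℝ) * P.rFun δ := by
      have := (le_div_iff₀ hn').mp hsup
      nlinarith [this]
    calc t = Real.exp (Real.log t) := (Real.exp_log ht).symm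
      _ ≤ Real.exp (-(n : ℝ) * P.rFun δ) := Real.exp_le_exp.mpr hfin
end
end

section
/- (NEP with respect to conditional entropy, part (a)) Assume sigma^2 = sum_{x,y} p(x,y)( -ln p(x|y) - H(X|Y) )^2 > 0. Then there exist delta* > 0 and K > 0 such that for every delta in (0, delta*]: | r(delta) - delta^2/(2 sigma^2) | <= K delta^3. -/
open scoped Classical BigOperators
open Finset

noncomputable section

set_option maxHeartbeats 1000000 in
lemma taylor_logZ {ι : Type*} [Fintype ι] (p w : ι → ℝ) (hp : ∀ i, 0 < p i)
    (hs : ∑ i, p i = 1)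
    (B : ℝ) (hB : 1 ≤ B) (hwB : ∀ i, |w i| ≤ B)
    (H : ℝ) (hH : H = ∑ i, p i * w i)
    (V : ℝ) (hV : V = ∑ i, p i * (w i - H) ^ 2)
    (lam : ℝ) (h0 : 0 ≤ lam) (h1 : lam ≤ 1 / (6 * B ^ 3)) :
    |Real.log (∑ i, p i * Real.exp (lam * w i)) - (lam * H + lam ^ 2 * V / 2)| ≤
      59 * B ^ 9 * lam ^ 3 := by
  have hB0 : (0:ℝ) < B := lt_of_lt_of_le one_pos hB
  have hB3 : (0:ℝ) < 6 * B ^ 3 := by positivity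
  have hlam1 : lam ≤ 1 := by
    refine h1.trans ?_
    rw [div_le_one hB3]
    have hB3' : (1:ℝ) ≤ B ^ 3 := one_le_pow₀ hB
    linarith
  have hne : Nonempty ι := by
    rcases isEmpty_or_nonempty ι with h | h
    · exfalso; rw [Finset.univ_eq_empty, Finset.sum_empty] at hs; norm_num at hs
    · exact h
  set Zv := ∑ i, p i * Real.exp (lam * w i) with hZv
  set A2 := ∑ i, p i * (w i) ^ 2 with hA2
  -- pointwise exp bound
  have key : ∀ i, |Real.exp (lam * w i) - (1 + lam * w i + (lam * w i) ^ 2 / 2)|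
      ≤ lam ^ 3 * B ^ 3 := by
    intro i
    have hwb := hwB i
    have habs : |lam * w i| ≤ lam * B := by
      rw [abs_mul, abs_of_nonneg h0]
      exact mul_le_mul_of_nonneg_left hwb h0
    have hx : |lam * w i| ≤ 1 := by
      refine habs.trans ?_
      calc lam * B ≤ (1 / (6 * B ^ 3)) * B := mul_le_mul_of_nonneg_right h1 hB0.le
        _ ≤ 1 := by
            rw [div_mul_eq_mul_div, div_le_one hB3]
            nlinarith [sq_nonneg B, sq_nonneg (B-1)]
    have hb := Real.exp_bound hx (n := 3) (by norm_num)
    have hsum : ∑ m ∈ Finset.range 3, (lam * w i) ^ m / (m.factorial : ℝ)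
        = 1 + lam * w i + (lam * w i) ^ 2 / 2 := by
      simp [Finset.sum_range_succ, Nat.factorial]
      try ring
    rw [hsum] at hb
    norm_num [Nat.factorial] at hb
    refine hb.trans ?_
    have h27 : |lam * w i| ^ 3 ≤ (lam * B) ^ 3 := by
      exact pow_le_pow_left₀ (abs_nonneg _) habs 3
    rw [← abs_mul]; nlinarith [pow_nonneg (abs_nonneg (lam * w i)) 3, pow_nonneg (mul_nonneg h0 hB0.le) 3]
  -- sum of the expansion
  have hexp : ∑ i, p i * (1 + lam * w i + (lam * w i) ^ 2 / 2)
      = 1 + lam * H + lam ^ 2 * A2 / 2 := by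
    have : ∀ i, p i * (1 + lam * w i + (lam * w i) ^ 2 / 2)
        = p i + lam * (p i * w i) + lam ^ 2 / 2 * (p i * w i ^ 2) := fun i => by ring
    rw [Finset.sum_congr rfl fun i _ => this i]
    rw [Finset.sum_add_distrib, Finset.sum_add_distrib, ← Finset.mul_sum, ← Finset.mul_sum,
      hs, ← hH, ← hA2]
    ring
  have hR1 : |Zv - (1 + lam * H + lam ^ 2 * A2 / 2)| ≤ lam ^ 3 * B ^ 3 := by
    rw [← hexp, ← Finset.sum_sub_distrib]
    calc |∑ i, (p i * Real.exp (lam * w i) - p i * (1 + lam * w i + (lam * w i) ^ 2 / 2))|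
        ≤ ∑ i, |p i * Real.exp (lam * w i) - p i * (1 + lam * w i + (lam * w i) ^ 2 / 2)| :=
          Finset.abs_sum_le_sum_abs _ _
      _ ≤ ∑ i, p i * (lam ^ 3 * B ^ 3) := by
          refine Finset.sum_le_sum fun i _ => ?_
          rw [← mul_sub, abs_mul, abs_of_pos (hp i)]
          exact mul_le_mul_of_nonneg_left (key i) (hp i).le
      _ = lam ^ 3 * B ^ 3 := by rw [← Finset.sum_mul, hs, one_mul]
  -- bounds on H, A2
  have hHB : |H| ≤ B := by
    rw [hH]
    calc |∑ i, p i * w i| ≤ ∑ i, |p i * w i| := Finset.abs_sum_le_sum_abs _ _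
      _ ≤ ∑ i, p i * B := Finset.sum_le_sum fun i _ => by
          rw [abs_mul, abs_of_pos (hp i)]
          exact mul_le_mul_of_nonneg_left (hwB i) (hp i).le
      _ = B := by rw [← Finset.sum_mul, hs, one_mul]
  have hA2B : |A2| ≤ B ^ 2 := by
    rw [hA2]
    calc |∑ i, p i * w i ^ 2| ≤ ∑ i, |p i * w i ^ 2| := Finset.abs_sum_le_sum_abs _ _
      _ ≤ ∑ i, p i * B ^ 2 := Finset.sum_le_sum fun i _ => by
          rw [abs_mul, abs_of_pos (hp i)]
          refine mul_le_mul_of_nonneg_left ?_ (hp i).le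
          rw [abs_of_nonneg (sq_nonneg _)]
          calc w i ^ 2 = |w i| ^ 2 := (sq_abs _).symm
            _ ≤ B ^ 2 := pow_le_pow_left₀ (abs_nonneg _) (hwB i) 2
      _ = B ^ 2 := by rw [← Finset.sum_mul, hs, one_mul]
  have hVeq : V = A2 - H ^ 2 := by
    have e : ∀ i, p i * (w i - H) ^ 2
        = p i * w i ^ 2 - 2 * H * (p i * w i) + H ^ 2 * p i := fun i => by ring
    rw [hV, Finset.sum_congr rfl fun i _ => e i, Finset.sum_add_distrib,
      Finset.sum_sub_distrib, ← Finset.mul_sum, ← Finset.mul_sum, hs, ← hH, ← hA2]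
    ring
  set u := Zv - 1 with hu
  have hR1' : |u - (lam * H + lam ^ 2 * A2 / 2)| ≤ lam ^ 3 * B ^ 3 := by
    have : u - (lam * H + lam ^ 2 * A2 / 2) = Zv - (1 + lam * H + lam ^ 2 * A2 / 2) := by
      rw [hu]; ring
    rw [this]; exact hR1
  have hl2 : lam ^ 2 ≤ lam := by nlinarith
  have hl3 : lam ^ 3 ≤ lam := by nlinarith
  have hBB : B ≤ B ^ 3 := by nlinarith [sq_nonneg B]
  have hB2B3 : B ^ 2 ≤ B ^ 3 := by nlinarith [sq_nonneg B]
  have hlamB3 : lam * B ^ 3 ≤ 1 / 6 := by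
    calc lam * B ^ 3 ≤ (1 / (6 * B ^ 3)) * B ^ 3 :=
          mul_le_mul_of_nonneg_right h1 (by positivity)
      _ = 1 / 6 := by field_simp
  have hub : |u| ≤ 3 * lam * B ^ 3 := by
    have t1 : |u| ≤ |u - (lam * H + lam ^ 2 * A2 / 2)| + |lam * H + lam ^ 2 * A2 / 2| := by
      have e : u = (u - (lam * H + lam ^ 2 * A2 / 2)) + (lam * H + lam ^ 2 * A2 / 2) := by ring
      calc |u| = |(u - (lam * H + lam ^ 2 * A2 / 2)) + (lam * H + lam ^ 2 * A2 / 2)| := by rw [← e]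
        _ ≤ _ := abs_add_le _ _
    have t2 : |lam * H + lam ^ 2 * A2 / 2| ≤ lam * B + lam ^ 2 * B ^ 2 / 2 := by
      calc |lam * H + lam ^ 2 * A2 / 2| ≤ |lam * H| + |lam ^ 2 * A2 / 2| := abs_add_le _ _
        _ ≤ lam * B + lam ^ 2 * B ^ 2 / 2 := by
            rw [abs_mul, abs_of_nonneg h0, abs_div, abs_mul, abs_of_nonneg (sq_nonneg lam)]
            simp only [abs_two]
            gcongr
    have t3 : lam ^ 2 * B ^ 2 ≤ lam * B ^ 3 := by nlinarith [mul_nonneg h0 (sq_nonneg B)]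
    have t4 : lam ^ 3 * B ^ 3 ≤ lam * B ^ 3 := by nlinarith [pow_pos hB0 3]
    have t5 : lam * B ≤ lam * B ^ 3 := by nlinarith
    have t6 : 0 ≤ lam * B ^ 3 := by positivity
    linarith
  have huhalf : |u| ≤ 1 / 2 := by linarith
  have hZpos : 0 < Zv := Finset.sum_pos (fun i _ => mul_pos (hp i) (Real.exp_pos _))
    Finset.univ_nonempty
  -- log expansion
  have h2 : |Real.log Zv - (u - u ^ 2 / 2)| ≤ 2 * |u| ^ 3 := by
    have hlt : |(-u)| < 1 := by rw [abs_neg]; linarith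
    have := Real.abs_log_sub_add_sum_range_le hlt 2
    have e1 : ∑ i ∈ Finset.range 2, (-u) ^ (i + 1) / ((i : ℝ) + 1) = -u + u ^ 2 / 2 := by
      simp [Finset.sum_range_succ]
      ring
    have e2 : (1 : ℝ) - -u = Zv := by rw [hu]; ring
    rw [abs_neg] at this
    rw [e2] at this
    have e3 : |Real.log Zv - (u - u ^ 2 / 2)|
        = |(∑ i ∈ Finset.range 2, (-u) ^ (i + 1) / ((i : ℝ) + 1)) + Real.log Zv| := by
      rw [e1]; congr 1; ring
    have hcast : (∑ i ∈ Finset.range 2, (-u) ^ (i + 1) / ((i : ℕ) + 1 : ℝ))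
        = ∑ i ∈ Finset.range 2, (-u) ^ (i + 1) / ((i : ℝ) + 1) := by
      push_cast; rfl
    rw [e3]
    calc |(∑ i ∈ Finset.range 2, (-u) ^ (i + 1) / ((i : ℝ) + 1)) + Real.log Zv|
        ≤ |u| ^ (2 + 1) / (1 - |u|) := by rw [← hcast]; exact this
      _ ≤ |u| ^ 3 / (1 / 2) := by
          apply div_le_div_of_nonneg_left (by positivity) (by norm_num)
          linarith
      _ = 2 * |u| ^ 3 := by ring
  -- assemble
  have hdecomp : Real.log Zv - (lam * H + lam ^ 2 * V / 2)
      = (Real.log Zv - (u - u ^ 2 / 2)) + (u - (lam * H + lam ^ 2 * A2 / 2))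
        - (u ^ 2 - (lam * H) ^ 2) / 2 := by
    rw [hVeq]; ring
  have hfac : |u ^ 2 - (lam * H) ^ 2| ≤ 4 * lam ^ 3 * B ^ 5 := by
    have e : u ^ 2 - (lam * H) ^ 2 = (u - lam * H) * (u + lam * H) := by ring
    rw [e, abs_mul]
    have b1 : |u - lam * H| ≤ lam ^ 2 * B ^ 2 := by
      have t1 : |u - lam * H| ≤ |u - (lam * H + lam ^ 2 * A2 / 2)| + |lam ^ 2 * A2 / 2| := by
        have e : u - lam * H = (u - (lam * H + lam ^ 2 * A2 / 2)) + lam ^ 2 * A2 / 2 := by ring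
        calc |u - lam * H| = |(u - (lam * H + lam ^ 2 * A2 / 2)) + lam ^ 2 * A2 / 2| := by rw [← e]
          _ ≤ _ := abs_add_le _ _
      have t2 : |lam ^ 2 * A2 / 2| ≤ lam ^ 2 * B ^ 2 / 2 := by
        rw [abs_div, abs_mul, abs_of_nonneg (sq_nonneg lam)]
        simp only [abs_two]
        gcongr
      have t3 : lam ^ 3 * B ^ 3 ≤ lam ^ 2 / 6 := by nlinarith [sq_nonneg lam]
      nlinarith [sq_nonneg lam]
    have b2 : |u + lam * H| ≤ 4 * lam * B ^ 3 := by
      have := abs_add_le u (lam * H)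
      have t2 : |lam * H| ≤ lam * B := by
        rw [abs_mul, abs_of_nonneg h0]; exact mul_le_mul_of_nonneg_left hHB h0
      have t5 : lam * B ≤ lam * B ^ 3 := by nlinarith
      linarith
    calc |u - lam * H| * |u + lam * H| ≤ (lam ^ 2 * B ^ 2) * (4 * lam * B ^ 3) := by
          apply mul_le_mul b1 b2 (abs_nonneg _) (by positivity)
      _ = 4 * lam ^ 3 * B ^ 5 := by ring
  have hu3 : |u| ^ 3 ≤ 27 * lam ^ 3 * B ^ 9 := by
    have := pow_le_pow_left₀ (abs_nonneg u) hub 3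
    calc |u| ^ 3 ≤ (3 * lam * B ^ 3) ^ 3 := this
      _ = 27 * lam ^ 3 * B ^ 9 := by ring
  have hB39 : B ^ 3 ≤ B ^ 9 := pow_le_pow_right₀ hB (by norm_num)
  have hB59 : B ^ 5 ≤ B ^ 9 := pow_le_pow_right₀ hB (by norm_num)
  rw [hdecomp]
  have tri : |(Real.log Zv - (u - u ^ 2 / 2)) + (u - (lam * H + lam ^ 2 * A2 / 2))
      - (u ^ 2 - (lam * H) ^ 2) / 2|
      ≤ |Real.log Zv - (u - u ^ 2 / 2)| + |u - (lam * H + lam ^ 2 * A2 / 2)|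
        + |u ^ 2 - (lam * H) ^ 2| / 2 := by
    calc _ ≤ |(Real.log Zv - (u - u ^ 2 / 2)) + (u - (lam * H + lam ^ 2 * A2 / 2))|
          + |(u ^ 2 - (lam * H) ^ 2) / 2| := abs_sub _ _
      _ ≤ _ := by
          rw [abs_div]
          simp only [abs_two]
          gcongr
          exact abs_add_le _ _
  have hlam3 : 0 ≤ lam ^ 3 := by positivity
  refine tri.trans ?_
  nlinarith [hfac, hR1', h2, hu3]

set_option maxHeartbeats 4000000 in
lemma core_nep {ι : Type*} [Fintype ι] (p w : ι → ℝ) (hp : ∀ i, 0 < p i)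
    (hs : ∑ i, p i = 1)
    (H V : ℝ) (hH : H = ∑ i, p i * w i) (hV : V = ∑ i, p i * (w i - H) ^ 2)
    (hVpos : 0 < V) :
    ∃ δstar : ℝ, 0 < δstar ∧ ∃ K : ℝ, 0 < K ∧
      ∀ δ ∈ Set.Ioc (0 : ℝ) δstar,
        |sSup ((fun lam => lam * (H + δ) -
            Real.log (∑ i, p i * Real.exp (lam * w i))) '' Set.Ici 0) - δ ^ 2 / (2 * V)|
          ≤ K * δ ^ 3 := by
  have hne : Nonempty ι := by
    rcases isEmpty_or_nonempty ι with h | h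
    · exfalso; rw [Finset.univ_eq_empty, Finset.sum_empty] at hs; norm_num at hs
    · exact h
  set B : ℝ := 1 + ∑ i, |w i| with hBdef
  have hB : 1 ≤ B := by
    have : 0 ≤ ∑ i, |w i| := Finset.sum_nonneg fun i _ => abs_nonneg _
    simp [hBdef]; linarith
  have hB0 : (0:ℝ) < B := lt_of_lt_of_le one_pos hB
  have hwB : ∀ i, |w i| ≤ B := by
    intro i
    have h1 : |w i| ≤ ∑ j, |w j| :=
      Finset.single_le_sum (fun j _ => abs_nonneg (w j)) (Finset.mem_univ i)
    simp [hBdef]; linarith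
  set C : ℝ := 59 * B ^ 9 with hCdef
  have hC : 0 < C := by positivity
  set lam1 : ℝ := min (1 / (6 * B ^ 3)) (V / (4 * C)) with hlam1def
  have hlam1pos : 0 < lam1 := lt_min (by positivity) (by positivity)
  have hlam11 : lam1 ≤ 1 / (6 * B ^ 3) := min_le_left _ _
  have hlam1C : C * lam1 ≤ V / 4 := by
    have h1 : lam1 ≤ V / (4 * C) := min_le_right _ _
    calc C * lam1 ≤ C * (V / (4 * C)) := mul_le_mul_of_nonneg_left h1 hC.le
      _ = V / 4 := by field_simp
  have htay : ∀ lam, 0 ≤ lam → lam ≤ lam1 →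
      |Real.log (∑ i, p i * Real.exp (lam * w i)) - (lam * H + lam ^ 2 * V / 2)| ≤
        C * lam ^ 3 := fun lam h0 h1 =>
    taylor_logZ p w hp hs B hB hwB H hH V hV lam h0 (h1.trans hlam11)
  -- an index where w differs from H
  have hex : ∃ j, w j ≠ H := by
    by_contra h
    push_neg at h
    rw [hV] at hVpos
    have : ∑ i, p i * (w i - H) ^ 2 = 0 :=
      Finset.sum_eq_zero fun i _ => by rw [h i]; ring
    rw [this] at hVpos; exact lt_irrefl _ hVpos
  obtain ⟨j, hj⟩ := hex
  -- max of w
  obtain ⟨i0, _, hi0⟩ := Finset.exists_max_image Finset.univ w Finset.univ_nonempty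
  have hq : 0 < p i0 := hp i0
  have hq1 : p i0 ≤ 1 := by
    rw [← hs]
    exact Finset.single_le_sum (fun i _ => (hp i).le) (Finset.mem_univ i0)
  have hlogq : Real.log (p i0) ≤ 0 := Real.log_nonpos hq.le hq1
  have hwmaxH : H < w i0 := by
    have hle : H ≤ w i0 := by
      rw [hH]
      calc ∑ i, p i * w i ≤ ∑ i, p i * w i0 :=
            Finset.sum_le_sum fun i _ =>
              mul_le_mul_of_nonneg_left (hi0 i (Finset.mem_univ i)) (hp i).le
        _ = w i0 := by rw [← Finset.sum_mul, hs, one_mul]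
    rcases lt_or_eq_of_le hle with h | h
    · exact h
    · exfalso
      have hjlt : w j < w i0 := lt_of_le_of_ne (hi0 j (Finset.mem_univ j)) (by rw [← h]; exact hj)
      have : ∑ i, p i * w i < ∑ i, p i * w i0 :=
        Finset.sum_lt_sum
          (fun i _ => mul_le_mul_of_nonneg_left (hi0 i (Finset.mem_univ i)) (hp i).le)
          ⟨j, Finset.mem_univ j, by
            exact mul_lt_mul_of_pos_left hjlt (hp j)⟩
      rw [← hH] at this
      rw [← Finset.sum_mul, hs, one_mul] at this
      rw [← h] at this
      exact lt_irrefl _ this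
  set a : ℝ := (w i0 - H) / 2 with hadef
  have ha : 0 < a := by simp [hadef]; linarith
  have hZposAll : ∀ lam : ℝ, 0 < ∑ i, p i * Real.exp (lam * w i) := fun lam =>
    Finset.sum_pos (fun i _ => mul_pos (hp i) (Real.exp_pos _)) Finset.univ_nonempty
  -- global lower bound on log Z
  have hZlow : ∀ lam : ℝ, 0 ≤ lam →
      Real.log (p i0) + lam * w i0 ≤ Real.log (∑ i, p i * Real.exp (lam * w i)) := by
    intro lam _
    have h1 : p i0 * Real.exp (lam * w i0) ≤ ∑ i, p i * Real.exp (lam * w i) :=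
      Finset.single_le_sum (f := fun i => p i * Real.exp (lam * w i))
        (fun i _ => (mul_pos (hp i) (Real.exp_pos _)).le) (Finset.mem_univ i0)
    have h2 : Real.log (p i0 * Real.exp (lam * w i0)) = Real.log (p i0) + lam * w i0 := by
      rw [Real.log_mul hq.ne' (Real.exp_pos _).ne', Real.log_exp]
    rw [← h2]
    exact Real.log_le_log (mul_pos hq (Real.exp_pos _)) h1
  -- strict positivity of phi on (0, ∞)
  have hphipos : ∀ lam : ℝ, 0 < lam →
      lam * H < Real.log (∑ i, p i * Real.exp (lam * w i)) := by
    intro lam hlam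
    rw [Real.lt_log_iff_exp_lt (hZposAll lam)]
    have hsum : ∑ i, p i * (Real.exp (lam * H) * (1 + lam * (w i - H)))
        = Real.exp (lam * H) := by
      have e : ∀ i, p i * (Real.exp (lam * H) * (1 + lam * (w i - H)))
          = Real.exp (lam * H) * p i + (Real.exp (lam * H) * lam) * (p i * w i)
            - (Real.exp (lam * H) * lam * H) * p i := fun i => by ring
      rw [Finset.sum_congr rfl fun i _ => e i, Finset.sum_sub_distrib,
        Finset.sum_add_distrib, ← Finset.mul_sum, ← Finset.mul_sum, ← Finset.mul_sum,
        hs, ← hH]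
      ring
    rw [← hsum]
    refine Finset.sum_lt_sum (fun i _ => ?_) ⟨j, Finset.mem_univ j, ?_⟩
    · refine mul_le_mul_of_nonneg_left ?_ (hp i).le
      have h1 : lam * (w i - H) + 1 ≤ Real.exp (lam * (w i - H)) := Real.add_one_le_exp _
      calc Real.exp (lam * H) * (1 + lam * (w i - H))
          ≤ Real.exp (lam * H) * Real.exp (lam * (w i - H)) := by
            refine mul_le_mul_of_nonneg_left ?_ (Real.exp_pos _).le
            linarith
        _ = Real.exp (lam * w i) := by rw [← Real.exp_add]; congr 1; ring
    · refine mul_lt_mul_of_pos_left ?_ (hp j)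
      have hne0 : lam * (w j - H) ≠ 0 := by
        apply mul_ne_zero hlam.ne'
        intro h; apply hj; linarith [sub_eq_zero.mp h]
      have h1 : lam * (w j - H) + 1 < Real.exp (lam * (w j - H)) := Real.add_one_lt_exp hne0
      calc Real.exp (lam * H) * (1 + lam * (w j - H))
          < Real.exp (lam * H) * Real.exp (lam * (w j - H)) := by
            refine mul_lt_mul_of_pos_left ?_ (Real.exp_pos _)
            linarith
        _ = Real.exp (lam * w j) := by rw [← Real.exp_add]; congr 1; ring
  -- continuity
  have hcont : Continuous fun lam : ℝ =>
      Real.log (∑ i, p i * Real.exp (lam * w i)) - lam * H := by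
    apply Continuous.sub
    · apply Continuous.log
      · fun_prop
      · exact fun lam => (hZposAll lam).ne'
    · fun_prop
  set L0 : ℝ := (1 - Real.log (p i0)) / a with hL0def
  have hL0pos : 0 < L0 := div_pos (by linarith) ha
  set L : ℝ := max L0 lam1 + 1 with hLdef
  have hLpos : 0 < L := by
    have := le_max_right L0 lam1
    simp only [hLdef]; linarith [hlam1pos]
  have hlam1L : lam1 ≤ L := by
    have := le_max_right L0 lam1
    simp only [hLdef]; linarith
  have hL0L : L0 ≤ L := by
    have := le_max_left L0 lam1
    simp only [hLdef]; linarith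
  -- min of phi on [lam1, L]
  obtain ⟨lamm, hlamm_mem, hmin⟩ :=
    (isCompact_Icc : IsCompact (Set.Icc lam1 L)).exists_isMinOn
      (Set.nonempty_Icc.mpr hlam1L) hcont.continuousOn
  set m : ℝ := Real.log (∑ i, p i * Real.exp (lamm * w i)) - lamm * H with hmdef
  have hm : 0 < m := by
    have : 0 < lamm := lt_of_lt_of_le hlam1pos hlamm_mem.1
    have := hphipos lamm this
    simp only [hmdef]; linarith
  have h2a : w i0 - H = 2 * a := by rw [hadef]; ring
  have hL0a : L0 * a = 1 - Real.log (p i0) := by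
    rw [hL0def, div_mul_cancel₀ _ ha.ne']
  have hmlow : ∀ lam ∈ Set.Icc lam1 L,
      m ≤ Real.log (∑ i, p i * Real.exp (lam * w i)) - lam * H := fun lam hmem => by
    simpa [hmdef] using hmin hmem
  clear_value B C lam1 a L0 L m
  refine ⟨min a (min (m / L) (V * lam1)), lt_min ha (lt_min (div_pos hm hLpos)
    (mul_pos hVpos hlam1pos)), 64 * C / V ^ 3, by positivity, ?_⟩
  intro δ hδ
  obtain ⟨hδ0, hδle⟩ := hδ
  have hδa : δ ≤ a := hδle.trans (min_le_left _ _)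
  have hδm : δ * L ≤ m := by
    have h1 : δ ≤ m / L := hδle.trans ((min_le_right _ _).trans (min_le_left _ _))
    rwa [le_div_iff₀ hLpos] at h1
  have hδV : δ / V ≤ lam1 := by
    have h1 : δ ≤ V * lam1 := hδle.trans ((min_le_right _ _).trans (min_le_right _ _))
    rw [div_le_iff₀ hVpos]; linarith [h1]
  set S := (fun lam => lam * (H + δ) -
      Real.log (∑ i, p i * Real.exp (lam * w i))) '' Set.Ici (0:ℝ) with hSdef
  -- bound above
  have hub0 : ∀ y ∈ S, y ≤ -Real.log (p i0) := by
    rintro y ⟨lam, hlam, rfl⟩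
    simp only [Set.mem_Ici] at hlam
    have h1 := hZlow lam hlam
    have h2 : lam * (H + δ) - Real.log (∑ i, p i * Real.exp (lam * w i))
        ≤ lam * (H + δ) - (Real.log (p i0) + lam * w i0) := by linarith
    refine h2.trans ?_
    have h3 : H + δ - w i0 ≤ -a := by linarith [h2a, hδa]
    nlinarith [mul_nonneg hlam ha.le]
  have hbdd : BddAbove S := ⟨-Real.log (p i0), hub0⟩
  have htarget_nonneg : 0 ≤ δ ^ 2 / (2 * V) + 64 * C / V ^ 3 * δ ^ 3 := by positivity
  -- upper bound on sSup
  have hub : sSup S ≤ δ ^ 2 / (2 * V) + 64 * C / V ^ 3 * δ ^ 3 := by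
    refine Real.sSup_le ?_ htarget_nonneg
    rintro y ⟨lam, hlam, rfl⟩
    simp only [Set.mem_Ici] at hlam
    rcases le_or_gt lam lam1 with hcase | hcase
    · have ht := htay lam hlam hcase
      have hlow : lam * H + lam ^ 2 * V / 2 - C * lam ^ 3
          ≤ Real.log (∑ i, p i * Real.exp (lam * w i)) := by
        have := abs_le.mp ht
        linarith [this.1]
      have hg : lam * (H + δ) - Real.log (∑ i, p i * Real.exp (lam * w i))
          ≤ lam * δ - lam ^ 2 * V / 2 + C * lam ^ 3 := by
        have e : lam * (H + δ) = lam * H + lam * δ := by ring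
        rw [e]
        linarith [hlow]
      refine hg.trans ?_
      rcases le_or_gt lam (4 * δ / V) with hc2 | hc2
      · have h1 : lam * δ - lam ^ 2 * V / 2 ≤ δ ^ 2 / (2 * V) := by
          rw [le_div_iff₀ (by positivity : (0:ℝ) < 2 * V)]
          nlinarith [sq_nonneg (lam * V - δ)]
        have h2 : C * lam ^ 3 ≤ 64 * C / V ^ 3 * δ ^ 3 := by
          have h3 : lam ^ 3 ≤ (4 * δ / V) ^ 3 := pow_le_pow_left₀ hlam hc2 3
          calc C * lam ^ 3 ≤ C * (4 * δ / V) ^ 3 := mul_le_mul_of_nonneg_left h3 hC.le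
            _ = 64 * C / V ^ 3 * δ ^ 3 := by field_simp; ring
        linarith
      · have h4 : 4 * δ < lam * V := by rwa [div_lt_iff₀ hVpos] at hc2
        have h5 : C * lam ≤ V / 4 := by
          calc C * lam ≤ C * lam1 := mul_le_mul_of_nonneg_left hcase hC.le
            _ ≤ V / 4 := hlam1C
        have h6 : C * lam ^ 3 ≤ V / 4 * lam ^ 2 := by
          calc C * lam ^ 3 = (C * lam) * lam ^ 2 := by ring
            _ ≤ V / 4 * lam ^ 2 := mul_le_mul_of_nonneg_right h5 (sq_nonneg _)
        have h7 : lam * δ ≤ lam ^ 2 * V / 4 := by nlinarith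
        have : lam * δ - lam ^ 2 * V / 2 + C * lam ^ 3 ≤ 0 := by nlinarith
        linarith [htarget_nonneg]
    · rcases le_or_gt lam L with hc2 | hc2
      · have hmem : lam ∈ Set.Icc lam1 L := ⟨hcase.le, hc2⟩
        have hphi : m ≤ Real.log (∑ i, p i * Real.exp (lam * w i)) - lam * H :=
          hmlow lam hmem
        have h1 : lam * δ ≤ L * δ := mul_le_mul_of_nonneg_right hc2 hδ0.le
        have h2 : lam * (H + δ) - Real.log (∑ i, p i * Real.exp (lam * w i))
            ≤ lam * δ - m := by
          have e : lam * (H + δ) = lam * H + lam * δ := by ring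
          rw [e]
          linarith [hphi]
        have : lam * (H + δ) - Real.log (∑ i, p i * Real.exp (lam * w i)) ≤ 0 := by
          nlinarith [hδm]
        linarith [htarget_nonneg]
      · have h1 := hZlow lam hlam
        have h3 : H + δ - w i0 ≤ -a := by linarith [h2a, hδa]
        have h4 : lam * (H + δ - w i0) ≤ -L0 * a := by
          calc lam * (H + δ - w i0) ≤ lam * (-a) := by
                exact mul_le_mul_of_nonneg_left h3 hlam
            _ ≤ L0 * (-a) := by
                have hlamL0 : L0 ≤ lam := hL0L.trans hc2.le
                nlinarith
            _ = -L0 * a := by ring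
        have : lam * (H + δ) - Real.log (∑ i, p i * Real.exp (lam * w i)) ≤ -1 := by
          have h5 : lam * (H + δ) - Real.log (∑ i, p i * Real.exp (lam * w i))
              ≤ lam * (H + δ) - (Real.log (p i0) + lam * w i0) := by linarith
          have h6 : lam * (H + δ) - (Real.log (p i0) + lam * w i0)
              = lam * (H + δ - w i0) - Real.log (p i0) := by ring
          rw [h6] at h5
          have h7 : lam * (H + δ - w i0) - Real.log (p i0)
              ≤ -L0 * a - Real.log (p i0) := by linarith
          have h8 : -L0 * a - Real.log (p i0) = -1 := by rw [neg_mul, hL0a]; ring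
          linarith
        linarith [htarget_nonneg]
  -- lower bound on sSup
  have hlb : δ ^ 2 / (2 * V) - C / V ^ 3 * δ ^ 3 ≤ sSup S := by
    have hmem : (δ / V) * (H + δ) -
        Real.log (∑ i, p i * Real.exp ((δ / V) * w i)) ∈ S :=
      ⟨δ / V, by simp [Set.mem_Ici]; positivity, rfl⟩
    have hle := le_csSup hbdd hmem
    have ht := htay (δ / V) (by positivity) hδV
    have hup : Real.log (∑ i, p i * Real.exp ((δ / V) * w i))
        ≤ (δ / V) * H + (δ / V) ^ 2 * V / 2 + C * (δ / V) ^ 3 := by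
      have := abs_le.mp ht
      linarith [this.2]
    have heq1 : (δ / V) * (H + δ) - ((δ / V) * H + (δ / V) ^ 2 * V / 2 + C * (δ / V) ^ 3)
        = δ ^ 2 / (2 * V) - C / V ^ 3 * δ ^ 3 := by
      field_simp
      ring
    nlinarith [hle, hup]
  rw [abs_le]
  constructor
  · have h1 : C / V ^ 3 * δ ^ 3 ≤ 64 * C / V ^ 3 * δ ^ 3 := by
      have : (0:ℝ) ≤ δ ^ 3 := by positivity
      have h2 : C / V ^ 3 ≤ 64 * C / V ^ 3 := by
        have hv3 : (0:ℝ) < V ^ 3 := by positivity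
        rw [div_le_div_iff₀ hv3 hv3]
        nlinarith
      nlinarith
    linarith [hlb]
  · linarith [hub]

/-- NEP w.r.t. conditional entropy, part (a): assuming
`σ² = sum_{x,y} p(x,y)(-ln p(x|y) - H(X|Y))² > 0`, there are `δ* > 0` and `K > 0` such
that `|r(δ) - δ²/(2σ²)| ≤ K δ³` for every `δ ∈ (0, δ*]`. -/
theorem nep_condEnt_quadratic {X Y : Type} [Fintype X] [Fintype Y] (P : JointPMF X Y)
    (hσ : 0 < P.sigma0) :
    ∃ δstar : ℝ, 0 < δstar ∧ ∃ K : ℝ, 0 < K ∧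
      ∀ δ ∈ Set.Ioc (0 : ℝ) δstar,
        |P.rFun δ - δ ^ 2 / (2 * P.sigma0)| ≤ K * δ ^ 3 := by
  classical
  have hXne : Nonempty X := by
    rcases isEmpty_or_nonempty X with h | h
    · exfalso
      have := P.p_sum
      rw [Finset.univ_eq_empty, Finset.sum_empty] at this
      norm_num at this
    · exact h
  set p' : X × Y → ℝ := fun z => P.p z.1 z.2 with hp'def
  set w' : X × Y → ℝ := fun z => -Real.log (P.pXY z.1 z.2) with hw'def
  have hp' : ∀ z, 0 < p' z := fun z => P.p_pos _ _
  have hs' : ∑ z, p' z = 1 := by rw [Fintype.sum_prod_type]; exact P.p_sum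
  have hpYpos : ∀ y, 0 < P.pY y := fun y =>
    Finset.sum_pos (fun x _ => P.p_pos x y) Finset.univ_nonempty
  have hpXYpos : ∀ x y, 0 < P.pXY x y := fun x y => div_pos (P.p_pos x y) (hpYpos y)
  have hH : P.condEnt = ∑ z, p' z * w' z := by
    rw [JointPMF.condEnt]
    simp only [Fintype.sum_prod_type]
    rfl
  have hV : P.sigma0 = ∑ z, p' z * (w' z - P.condEnt) ^ 2 := by
    rw [JointPMF.sigma0]
    simp only [Fintype.sum_prod_type]
    rfl
  have htilt : ∀ lam : ℝ, P.tiltLogSum lam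
      = Real.log (∑ z, p' z * Real.exp (lam * w' z)) := by
    intro lam
    rw [JointPMF.tiltLogSum]
    congr 1
    simp only [Fintype.sum_prod_type]
    refine Finset.sum_congr rfl fun x _ => Finset.sum_congr rfl fun y _ => ?_
    have hx := hpXYpos x y
    show P.pY y * P.pXY x y ^ (1 - lam) = P.p x y * Real.exp (lam * -Real.log (P.pXY x y))
    rw [Real.rpow_def_of_pos hx]
    have e1 : Real.log (P.pXY x y) * (1 - lam)
        = Real.log (P.pXY x y) + lam * (-Real.log (P.pXY x y)) := by ring
    rw [e1, Real.exp_add, Real.exp_log hx, ← mul_assoc]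
    have e2 : P.pY y * P.pXY x y = P.p x y := by
      rw [JointPMF.pXY, mul_div_cancel₀]
      exact (hpYpos y).ne'
    rw [e2]
  obtain ⟨δstar, hδstar, K, hK, hmain⟩ :=
    core_nep p' w' hp' hs' P.condEnt P.sigma0 hH hV hσ
  refine ⟨δstar, hδstar, K, hK, fun δ hδ => ?_⟩
  have hfun : (fun lam => lam * (P.condEnt + δ) - P.tiltLogSum lam)
      = fun lam => lam * (P.condEnt + δ) -
          Real.log (∑ z, p' z * Real.exp (lam * w' z)) :=
    funext fun lam => by rw [htilt]
  have hr : P.rFun δ = sSup ((fun lam => lam * (P.condEnt + δ) -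
      Real.log (∑ z, p' z * Real.exp (lam * w' z))) '' Set.Ici 0) := by
    rw [JointPMF.rFun, hfun]
  rw [hr]
  exact hmain δ hδ
end
end

section
/- (Properties of the rate function r) Assume sigma^2(0) > 0. Then: (i) delta(0) = 0 and lambda -> delta(lambda) is strictly increasing on [0, infinity); (ii) for every lambda >= 0, r( delta(lambda) ) = lambda ( H(X|Y) + delta(lambda) ) - ln sum_{x,y} p(y) p(x|y)^{1-lambda}; (iii) setting Delta* = lim_{lambda -> infinity} delta(lambda), the function r is convex and strictly increasing on (0, Delta*), and is differentiable there with derivative r'( delta(lambda) ) = lambda for every lambda > 0 with delta(lambda) < Delta*. -/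
open scoped Classical BigOperators
open Finset

noncomputable section

namespace JointPMF

variable {X Y : Type} [Fintype X] [Fintype Y] (P : JointPMF X Y)

-- ##### auxiliary development #####

lemma nonempty_X (Q : JointPMF X Y) : Nonempty X := by
  by_contra h
  rw [not_nonempty_iff] at h
  have := Q.p_sum
  simp [Finset.univ_eq_empty] at this

lemma nonempty_Y (Q : JointPMF X Y) : Nonempty Y := by
  by_contra h
  rw [not_nonempty_iff] at h
  have := Q.p_sum
  simp [Finset.univ_eq_empty] at this

lemma pY_mul_pXY (x : X) (y : Y) : P.pY y * P.pXY x y = P.p x y := by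
  rw [pXY, mul_comm, div_mul_cancel₀ _ (P.pY_pos y).ne']

def Zf (x : X) (y : Y) : ℝ := -Real.log (P.pXY x y)
def Sf (l : ℝ) : ℝ := ∑ x, ∑ y, P.p x y * Real.exp (l * P.Zf x y)
def S1f (l : ℝ) : ℝ := ∑ x, ∑ y, P.p x y * (Real.exp (l * P.Zf x y) * P.Zf x y)
def S2f (l : ℝ) : ℝ :=
  ∑ x, ∑ y, P.p x y * (Real.exp (l * P.Zf x y) * P.Zf x y * P.Zf x y)

lemma rpow_sub_eq (x : X) (y : Y) (l : ℝ) :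
    P.pXY x y ^ (1 - l) = P.pXY x y * Real.exp (l * P.Zf x y) := by
  have h := P.pXY_pos x y
  rw [Real.rpow_def_of_pos h,
    show Real.log (P.pXY x y) * (1 - l)
        = Real.log (P.pXY x y) + l * P.Zf x y by rw [Zf]; ring,
    Real.exp_add, Real.exp_log h]

lemma rpow_neg_eq (x : X) (y : Y) (l : ℝ) :
    P.pXY x y ^ (-l) = Real.exp (l * P.Zf x y) := by
  have h := P.pXY_pos x y
  rw [Real.rpow_def_of_pos h]
  congr 1
  rw [Zf]; ring

lemma sum_eq_Sf (l : ℝ) :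
    (∑ x, ∑ y, P.pY y * P.pXY x y ^ (1 - l)) = P.Sf l := by
  refine Finset.sum_congr rfl fun x _ => Finset.sum_congr rfl fun y _ => ?_
  rw [P.rpow_sub_eq, ← mul_assoc, P.pY_mul_pXY]

lemma Sf_pos (l : ℝ) : 0 < P.Sf l := by
  have := P.nonempty_X; have := P.nonempty_Y
  refine Finset.sum_pos (fun x _ => Finset.sum_pos (fun y _ => ?_) Finset.univ_nonempty)
    Finset.univ_nonempty
  exact mul_pos (P.p_pos x y) (Real.exp_pos _)

lemma Sf_zero : P.Sf 0 = 1 := by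
  rw [Sf]
  simpa using P.p_sum

lemma tiltLogSum_eq (l : ℝ) : P.tiltLogSum l = Real.log (P.Sf l) := by
  rw [tiltLogSum, P.sum_eq_Sf]

lemma fLam_eq (l : ℝ) (x : X) (y : Y) :
    P.fLam l x y = Real.exp (l * P.Zf x y) / P.Sf l := by
  rw [fLam, P.rpow_neg_eq, P.sum_eq_Sf]

lemma condEnt_eq : P.condEnt = ∑ x, ∑ y, P.p x y * P.Zf x y := rfl

lemma deltaLam_eq (l : ℝ) : P.deltaLam l = P.S1f l / P.Sf l - P.condEnt := by
  rw [deltaLam]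
  congr 1
  rw [S1f, Finset.sum_div]
  refine Finset.sum_congr rfl fun x _ => ?_
  rw [Finset.sum_div]
  refine Finset.sum_congr rfl fun y _ => ?_
  rw [P.fLam_eq]
  show P.p x y * (Real.exp (l * P.Zf x y) / P.Sf l * P.Zf x y) = _
  ring

lemma condEnt_add_delta (l : ℝ) :
    P.condEnt + P.deltaLam l = P.S1f l / P.Sf l := by
  rw [P.deltaLam_eq]; ring

lemma sigmaSq_eq (l : ℝ) :
    P.sigmaSq l = P.S2f l / P.Sf l - (P.S1f l / P.Sf l) ^ 2 := by
  have hS := (P.Sf_pos l).ne'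
  have hterm : P.sigmaSq l
      = (∑ x, ∑ y, P.p x y * Real.exp (l * P.Zf x y)
          * (P.Zf x y - P.S1f l / P.Sf l) ^ 2) / P.Sf l := by
    rw [sigmaSq, Finset.sum_div]
    refine Finset.sum_congr rfl fun x _ => ?_
    rw [Finset.sum_div]
    refine Finset.sum_congr rfl fun y _ => ?_
    rw [P.fLam_eq, ← mul_assoc (P.pY y), P.pY_mul_pXY, P.condEnt_add_delta, sq_abs]
    show Real.exp (l * P.Zf x y) / P.Sf l
        * (P.p x y * (P.Zf x y - P.S1f l / P.Sf l) ^ 2) = _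
    ring
  have hid : (∑ x, ∑ y, P.p x y * Real.exp (l * P.Zf x y)
          * (P.Zf x y - P.S1f l / P.Sf l) ^ 2)
      = P.S2f l - 2 * (P.S1f l / P.Sf l) * P.S1f l
        + (P.S1f l / P.Sf l) ^ 2 * P.Sf l := by
    rw [S2f, S1f, Sf]
    simp only [Finset.mul_sum, ← Finset.sum_sub_distrib, ← Finset.sum_add_distrib]
    refine Finset.sum_congr rfl fun x _ => Finset.sum_congr rfl fun y _ => ?_
    ring
  rw [hterm, hid]
  field_simp
  ring

lemma hasDerivAt_Sf (l : ℝ) : HasDerivAt P.Sf (P.S1f l) l := by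
  rw [show P.Sf = fun t => ∑ x, ∑ y, P.p x y * Real.exp (t * P.Zf x y) from rfl, S1f]
  refine HasDerivAt.fun_sum fun x _ => HasDerivAt.fun_sum fun y _ => ?_
  exact ((hasDerivAt_mul_const (P.Zf x y)).exp).const_mul (P.p x y)

lemma hasDerivAt_S1f (l : ℝ) : HasDerivAt P.S1f (P.S2f l) l := by
  rw [show P.S1f = fun t => ∑ x, ∑ y, P.p x y * (Real.exp (t * P.Zf x y) * P.Zf x y)
      from rfl, S2f]
  refine HasDerivAt.fun_sum fun x _ => HasDerivAt.fun_sum fun y _ => ?_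
  exact (((hasDerivAt_mul_const (P.Zf x y)).exp).mul_const (P.Zf x y)).const_mul (P.p x y)

lemma hasDerivAt_Lambda (l : ℝ) :
    HasDerivAt (fun t => Real.log (P.Sf t)) (P.condEnt + P.deltaLam l) l := by
  rw [P.condEnt_add_delta]
  exact (P.hasDerivAt_Sf l).log (P.Sf_pos l).ne'

lemma hasDerivAt_delta (l : ℝ) : HasDerivAt P.deltaLam (P.sigmaSq l) l := by
  have hfun : P.deltaLam = fun t => P.S1f t / P.Sf t - P.condEnt :=
    funext fun t => P.deltaLam_eq t
  rw [hfun]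
  have h := ((P.hasDerivAt_S1f l).div (P.hasDerivAt_Sf l) (P.Sf_pos l).ne').sub_const
    P.condEnt
  refine h.congr_deriv ?_
  symm
  rw [P.sigmaSq_eq]
  have := (P.Sf_pos l).ne'
  field_simp

lemma S1f_zero : P.S1f 0 = P.condEnt := by
  rw [S1f, condEnt_eq]
  refine Finset.sum_congr rfl fun x _ => Finset.sum_congr rfl fun y _ => ?_
  simp

lemma deltaLam_zero : P.deltaLam 0 = 0 := by
  rw [P.deltaLam_eq, P.S1f_zero, P.Sf_zero]
  simp

lemma exists_ne (hσ : 0 < P.sigmaSq 0) : ∃ x y, P.Zf x y ≠ P.condEnt := by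
  by_contra h
  push_neg at h
  have hz : P.sigmaSq 0 = 0 := by
    rw [sigmaSq]
    refine Finset.sum_eq_zero fun x _ => Finset.sum_eq_zero fun y _ => ?_
    have hz := h x y
    rw [Zf] at hz
    rw [P.deltaLam_zero, add_zero, hz, sub_self, abs_zero]
    simp
  linarith

lemma sigmaSq_pos (hσ : 0 < P.sigmaSq 0) (l : ℝ) : 0 < P.sigmaSq l := by
  obtain ⟨x0, y0, hx0⟩ := P.exists_ne hσ
  have hne : ∃ x1 y1, P.Zf x1 y1 ≠ P.condEnt + P.deltaLam l := by
    by_contra h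
    push_neg at h
    have hH : P.condEnt = P.condEnt + P.deltaLam l := by
      conv_lhs => rw [P.condEnt_eq]
      calc (∑ x, ∑ y, P.p x y * P.Zf x y)
          = ∑ x, ∑ y, P.p x y * (P.condEnt + P.deltaLam l) :=
            Finset.sum_congr rfl fun x _ => Finset.sum_congr rfl fun y _ => by rw [h x y]
        _ = (∑ x, ∑ y, P.p x y) * (P.condEnt + P.deltaLam l) := by
            simp only [← Finset.sum_mul]
        _ = P.condEnt + P.deltaLam l := by rw [P.p_sum, one_mul]
    exact hx0 ((h x0 y0).trans hH.symm)
  obtain ⟨x1, y1, h1⟩ := hne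
  have hterm : ∀ x y, 0 ≤ P.fLam l x y * (P.pY y * (P.pXY x y *
      |(-Real.log (P.pXY x y)) - (P.condEnt + P.deltaLam l)| ^ 2)) := by
    intro x y
    have hf : 0 < P.fLam l x y := by
      rw [P.fLam_eq]
      exact div_pos (Real.exp_pos _) (P.Sf_pos l)
    have h2 : (0:ℝ) ≤ |(-Real.log (P.pXY x y)) - (P.condEnt + P.deltaLam l)| ^ 2 := by
      positivity
    exact mul_nonneg hf.le (mul_nonneg (P.pY_pos y).le
      (mul_nonneg (P.pXY_pos x y).le h2))
  have hpos : 0 < P.fLam l x1 y1 * (P.pY y1 * (P.pXY x1 y1 *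
      |(-Real.log (P.pXY x1 y1)) - (P.condEnt + P.deltaLam l)| ^ 2)) := by
    have hf : 0 < P.fLam l x1 y1 := by
      rw [P.fLam_eq]
      exact div_pos (Real.exp_pos _) (P.Sf_pos l)
    have habs : 0 < |(-Real.log (P.pXY x1 y1)) - (P.condEnt + P.deltaLam l)| := by
      rw [abs_pos, sub_ne_zero]
      exact h1
    exact mul_pos hf (mul_pos (P.pY_pos y1) (mul_pos (P.pXY_pos x1 y1)
      (pow_pos habs 2)))
  rw [sigmaSq]
  exact Finset.sum_pos' (fun x _ => Finset.sum_nonneg fun y _ => hterm x y)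
    ⟨x1, Finset.mem_univ x1, Finset.sum_pos' (fun y _ => hterm x1 y)
      ⟨y1, Finset.mem_univ y1, hpos⟩⟩

lemma strictMono_delta (hσ : 0 < P.sigmaSq 0) : StrictMono P.deltaLam := by
  refine strictMono_of_deriv_pos fun t => ?_
  rw [(P.hasDerivAt_delta t).deriv]
  exact P.sigmaSq_pos hσ t

lemma continuous_delta : Continuous P.deltaLam := by
  have hdiff : Differentiable ℝ P.deltaLam := fun t =>
    (P.hasDerivAt_delta t).differentiableAt
  exact hdiff.continuous

lemma g_le (hσ : 0 < P.sigmaSq 0) {l0 : ℝ} (h0 : 0 ≤ l0) {l : ℝ} (hl : 0 ≤ l) :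
    l * (P.condEnt + P.deltaLam l0) - P.tiltLogSum l
      ≤ l0 * (P.condEnt + P.deltaLam l0) - P.tiltLogSum l0 := by
  simp only [P.tiltLogSum_eq]
  set c := P.condEnt + P.deltaLam l0 with hc
  set g : ℝ → ℝ := fun t => t * c - Real.log (P.Sf t) with hg
  have hder : ∀ t, HasDerivAt g (c - (P.condEnt + P.deltaLam t)) t := fun t =>
    (hasDerivAt_mul_const c).sub (P.hasDerivAt_Lambda t)
  have hdiff : Differentiable ℝ g := fun t => (hder t).differentiableAt
  have hderiv : ∀ t, deriv g t = c - (P.condEnt + P.deltaLam t) := fun t => (hder t).deriv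
  have hmono := (P.strictMono_delta hσ).monotone
  rcases le_total l l0 with h | h
  · have : MonotoneOn g (Set.Icc 0 l0) := by
      refine monotoneOn_of_deriv_nonneg (convex_Icc 0 l0) hdiff.continuous.continuousOn
        (hdiff.differentiableOn) fun x hx => ?_
      rw [hderiv, hc]
      have : P.deltaLam x ≤ P.deltaLam l0 := by
        rw [interior_Icc] at hx
        exact hmono hx.2.le
      linarith
    exact this ⟨hl, h⟩ ⟨h0, le_refl l0⟩ h
  · have : AntitoneOn g (Set.Icc l0 l) := by
      refine antitoneOn_of_deriv_nonpos (convex_Icc l0 l) hdiff.continuous.continuousOn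
        (hdiff.differentiableOn) fun x hx => ?_
      rw [hderiv, hc]
      have : P.deltaLam l0 ≤ P.deltaLam x := by
        rw [interior_Icc] at hx
        exact hmono hx.1.le
      linarith
    exact this ⟨le_refl l0, h⟩ ⟨h, le_refl l⟩ h

lemma bddAbove_rset (hσ : 0 < P.sigmaSq 0) {l0 : ℝ} (h0 : 0 ≤ l0) :
    BddAbove ((fun lam => lam * (P.condEnt + P.deltaLam l0) - P.tiltLogSum lam)
      '' Set.Ici 0) := by
  refine ⟨l0 * (P.condEnt + P.deltaLam l0) - P.tiltLogSum l0, ?_⟩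
  rintro v ⟨l, hl, rfl⟩
  exact P.g_le hσ h0 hl

lemma rFun_delta (hσ : 0 < P.sigmaSq 0) {l0 : ℝ} (h0 : 0 ≤ l0) :
    P.rFun (P.deltaLam l0)
      = l0 * (P.condEnt + P.deltaLam l0) - P.tiltLogSum l0 := by
  refine IsGreatest.csSup_eq ⟨⟨l0, h0, rfl⟩, ?_⟩
  rintro v ⟨l, hl, rfl⟩
  exact P.g_le hσ h0 hl

lemma zero_mem_rset (d : ℝ) :
    (0:ℝ) ∈ (fun lam => lam * (P.condEnt + d) - P.tiltLogSum lam) '' Set.Ici 0 :=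
  ⟨0, Set.self_mem_Ici, by simp [P.tiltLogSum_zero]⟩

lemma slope_le (hσ : 0 < P.sigmaSq 0) {a b : ℝ} (ha : 0 ≤ a) (hb : 0 ≤ b) :
    P.rFun (P.deltaLam b) - P.rFun (P.deltaLam a)
      ≤ b * (P.deltaLam b - P.deltaLam a) := by
  have h1 := P.rFun_delta hσ hb
  have h2 : b * (P.condEnt + P.deltaLam a) - P.tiltLogSum b ≤ P.rFun (P.deltaLam a) :=
    le_csSup (P.bddAbove_rset hσ ha) ⟨b, hb, rfl⟩
  rw [h1]
  linarith

lemma exists_delta_eq (hσ : 0 < P.sigmaSq 0) {T d : ℝ} (hd0 : 0 < d)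
    (hdT : d < P.deltaLam T) : ∃ μ, 0 < μ ∧ μ < T ∧ P.deltaLam μ = d := by
  have hT : (0:ℝ) ≤ T := by
    by_contra h
    push_neg at h
    have := P.strictMono_delta hσ h
    rw [P.deltaLam_zero] at this
    linarith
  have hsub := intermediate_value_Ioo hT P.continuous_delta.continuousOn
  have hmem : d ∈ Set.Ioo (P.deltaLam 0) (P.deltaLam T) := by
    rw [P.deltaLam_zero]
    exact ⟨hd0, hdT⟩
  obtain ⟨μ, hμ, hμd⟩ := hsub hmem
  exact ⟨μ, hμ.1, hμ.2, hμd⟩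

lemma rFun_nonneg (hσ : 0 < P.sigmaSq 0) {l0 : ℝ} (h0 : 0 ≤ l0) :
    0 ≤ P.rFun (P.deltaLam l0) :=
  le_csSup (P.bddAbove_rset hσ h0) (P.zero_mem_rset _)

lemma exists_delta_eq' (hσ : 0 < P.sigmaSq 0) {Δstar d : ℝ}
    (hΔ : Filter.Tendsto P.deltaLam Filter.atTop (nhds Δstar))
    (hd0 : 0 < d) (hdΔ : d < Δstar) : ∃ μ, 0 < μ ∧ P.deltaLam μ = d := by
  obtain ⟨T, hT⟩ := (hΔ.eventually (eventually_gt_nhds hdΔ)).exists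
  obtain ⟨μ, hμ0, _, hμeq⟩ := P.exists_delta_eq hσ hd0 hT
  exact ⟨μ, hμ0, hμeq⟩

lemma hasDerivAt_rFun (hσ : 0 < P.sigmaSq 0) {l0 : ℝ} (hl0 : 0 < l0) :
    HasDerivAt P.rFun l0 (P.deltaLam l0) := by
  rw [hasDerivAt_iff_tendsto_slope, Metric.tendsto_nhdsWithin_nhds]
  intro ε hε
  set ε' := min (ε / 2) (l0 / 2) with hε'def
  have hε' : 0 < ε' := lt_min (by linarith) (by linarith)
  have hε'l0 : ε' < l0 := lt_of_le_of_lt (min_le_right _ _) (by linarith)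
  have hε'ε : ε' ≤ ε / 2 := min_le_left _ _
  have hsm := P.strictMono_delta hσ
  set d0 := P.deltaLam l0 with hd0
  have hlo : P.deltaLam (l0 - ε') < d0 := hsm (by linarith)
  have hhi : d0 < P.deltaLam (l0 + ε') := hsm (by linarith)
  refine ⟨min (d0 - P.deltaLam (l0 - ε')) (P.deltaLam (l0 + ε') - d0),
    lt_min (by linarith) (by linarith), ?_⟩
  intro y hy hdist
  have hyne : y ≠ d0 := hy
  rw [Real.dist_eq] at hdist
  have habs := abs_lt.mp hdist
  have hmin1 := min_le_left (d0 - P.deltaLam (l0 - ε')) (P.deltaLam (l0 + ε') - d0)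
  have hmin2 := min_le_right (d0 - P.deltaLam (l0 - ε')) (P.deltaLam (l0 + ε') - d0)
  have h1a : P.deltaLam (l0 - ε') < y := by linarith
  have h1b : y < P.deltaLam (l0 + ε') := by linarith
  have hy0 : 0 < y := by
    have h := hsm (show (0:ℝ) < l0 - ε' by linarith)
    rw [P.deltaLam_zero] at h
    linarith
  obtain ⟨μ, hμ0, hμT, hμeq⟩ := P.exists_delta_eq hσ hy0 h1b
  have hμlow : l0 - ε' < μ := by
    have h := h1a
    rw [← hμeq] at h
    exact hsm.lt_iff_lt.mp h
  have hA1 : P.rFun y - P.rFun d0 ≤ μ * (y - d0) := by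
    have h := P.slope_le hσ (le_of_lt hl0) (le_of_lt hμ0)
    rw [hμeq] at h
    exact h
  have hA2 : l0 * (y - d0) ≤ P.rFun y - P.rFun d0 := by
    have h := P.slope_le hσ (le_of_lt hμ0) (le_of_lt hl0)
    rw [hμeq] at h
    linarith
  have hEub : P.rFun y - P.rFun d0 - l0 * (y - d0) ≤ ε' * |y - d0| := by
    have h3 : P.rFun y - P.rFun d0 - l0 * (y - d0) ≤ (μ - l0) * (y - d0) := by
      linarith
    have h4 : (μ - l0) * (y - d0) ≤ |μ - l0| * |y - d0| := by
      rw [← abs_mul]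
      exact le_abs_self _
    have h5 : |μ - l0| ≤ ε' := by
      rw [abs_le]
      constructor <;> linarith
    nlinarith [abs_nonneg (y - d0)]
  have hElb : 0 ≤ P.rFun y - P.rFun d0 - l0 * (y - d0) := by linarith
  have hne : y - d0 ≠ 0 := sub_ne_zero.mpr hyne
  rw [Real.dist_eq, slope_def_field]
  have hrw : (P.rFun y - P.rFun d0) / (y - d0) - l0
      = (P.rFun y - P.rFun d0 - l0 * (y - d0)) / (y - d0) := by
    field_simp
  rw [hrw, abs_div]
  have habspos : 0 < |y - d0| := abs_pos.mpr hne
  have : |P.rFun y - P.rFun d0 - l0 * (y - d0)| / |y - d0| ≤ ε' := by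
    rw [div_le_iff₀ habspos, abs_of_nonneg hElb]
    exact hEub
  linarith

lemma convexOn_rFun (hσ : 0 < P.sigmaSq 0) {Δstar : ℝ}
    (hΔ : Filter.Tendsto P.deltaLam Filter.atTop (nhds Δstar)) :
    ConvexOn ℝ (Set.Ioo 0 Δstar) P.rFun := by
  refine ⟨convex_Ioo 0 Δstar, ?_⟩
  intro d1 hd1 d2 hd2 a b ha hb hab
  simp only [smul_eq_mul]
  obtain ⟨μ1, hμ1, hμ1e⟩ := P.exists_delta_eq' hσ hΔ hd1.1 hd1.2
  obtain ⟨μ2, hμ2, hμ2e⟩ := P.exists_delta_eq' hσ hΔ hd2.1 hd2.2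
  subst hμ1e
  subst hμ2e
  refine Real.sSup_le ?_ ?_
  · rintro v ⟨l, hl, rfl⟩
    have e1 : l * (P.condEnt + P.deltaLam μ1) - P.tiltLogSum l
        ≤ P.rFun (P.deltaLam μ1) :=
      le_csSup (P.bddAbove_rset hσ hμ1.le) ⟨l, hl, rfl⟩
    have e2 : l * (P.condEnt + P.deltaLam μ2) - P.tiltLogSum l
        ≤ P.rFun (P.deltaLam μ2) :=
      le_csSup (P.bddAbove_rset hσ hμ2.le) ⟨l, hl, rfl⟩
    have hv : l * (P.condEnt + (a * P.deltaLam μ1 + b * P.deltaLam μ2))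
          - P.tiltLogSum l
        = a * (l * (P.condEnt + P.deltaLam μ1) - P.tiltLogSum l)
          + b * (l * (P.condEnt + P.deltaLam μ2) - P.tiltLogSum l) := by
      linear_combination (P.tiltLogSum l - l * P.condEnt) * hab
    dsimp only
    rw [hv]
    exact add_le_add (mul_le_mul_of_nonneg_left e1 ha) (mul_le_mul_of_nonneg_left e2 hb)
  · have n1 := P.rFun_nonneg hσ hμ1.le
    have n2 := P.rFun_nonneg hσ hμ2.le
    exact add_nonneg (mul_nonneg ha n1) (mul_nonneg hb n2)

lemma strictMonoOn_rFun (hσ : 0 < P.sigmaSq 0) {Δstar : ℝ}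
    (hΔ : Filter.Tendsto P.deltaLam Filter.atTop (nhds Δstar)) :
    StrictMonoOn P.rFun (Set.Ioo 0 Δstar) := by
  intro d1 hd1 d2 hd2 hlt
  obtain ⟨μ1, hμ1, hμ1e⟩ := P.exists_delta_eq' hσ hΔ hd1.1 hd1.2
  obtain ⟨μ2, hμ2, hμ2e⟩ := P.exists_delta_eq' hσ hΔ hd2.1 hd2.2
  subst hμ1e
  subst hμ2e
  have h1 := P.rFun_delta hσ hμ1.le
  have h2 : μ1 * (P.condEnt + P.deltaLam μ2) - P.tiltLogSum μ1
      ≤ P.rFun (P.deltaLam μ2) :=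
    le_csSup (P.bddAbove_rset hσ hμ2.le) ⟨μ1, hμ1.le, rfl⟩
  have h3 : 0 < μ1 * (P.deltaLam μ2 - P.deltaLam μ1) := mul_pos hμ1 (by linarith)
  linarith

end JointPMF

/-- properties of the rate function `r`: assuming `σ²(0) > 0`,
(i) `δ(0) = 0` and `λ ↦ δ(λ)` is strictly increasing on `[0,∞)`;
(ii) for every `λ ≥ 0`, `r(δ(λ)) = λ(H(X|Y)+δ(λ)) - ln sum_{x,y} p(y) p(x|y)^{1-λ}`;
(iii) with `Δ* = lim_{λ→∞} δ(λ)`, the function `r` is convex and strictly increasing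
on `(0,Δ*)` and differentiable there with `r'(δ(λ)) = λ` for every `λ > 0` with
`δ(λ) < Δ*`. -/
theorem rFun_properties {X Y : Type} [Fintype X] [Fintype Y] (P : JointPMF X Y)
    (hσ : 0 < P.sigmaSq 0) :
    P.deltaLam 0 = 0 ∧
    StrictMonoOn P.deltaLam (Set.Ici 0) ∧
    (∀ lam : ℝ, 0 ≤ lam →
      P.rFun (P.deltaLam lam) =
        lam * (P.condEnt + P.deltaLam lam) - P.tiltLogSum lam) ∧
    ∀ Δstar : ℝ, Filter.Tendsto P.deltaLam Filter.atTop (nhds Δstar) →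
      ConvexOn ℝ (Set.Ioo 0 Δstar) P.rFun ∧
      StrictMonoOn P.rFun (Set.Ioo 0 Δstar) ∧
      ∀ lam : ℝ, 0 < lam → P.deltaLam lam < Δstar →
        HasDerivAt P.rFun lam (P.deltaLam lam) := by
  exact ⟨P.deltaLam_zero, (P.strictMono_delta hσ).strictMonoOn _,
    fun lam hlam => P.rFun_delta hσ hlam, fun Δstar hΔ =>
    ⟨P.convexOn_rFun hσ hΔ, P.strictMonoOn_rFun hσ hΔ,
      fun lam hlam _ => P.hasDerivAt_rFun hσ hlam⟩⟩
end
end
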